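/- arXiv:2412.20764 — 6 statements merged into one kernel-verified Lean document; each statement's English description precedes it below -/
import Mathlib

section
/- Let p ≥ 1, J ⊆ I a set of full μ-measure, (u_n)_{n≥0} a sequence of measurable [0,∞]-valued functions on I and v : I → [0,∞] measurable such that u_n(t) ≤ v(t) + (∫_{I(t)} k(t,s)^p u_{n−1}(s)^p μ(ds))^{1/p} for all n ≥ 1 and t ∈ J. Then for every n ≥ 1 and t ∈ J: u_n(t) ≤ v(t) + Σ_{i=1}^{n−1} (∫_{I(t)} R_{k^p,μ,i}(t,s) v(s)^p μ(ds))^{1/p} + (∫_{I(t)} R_{k^p,μ,n}(t,s) u_0(s)^p μ(ds))^{1/p}. -/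
open MeasureTheory ENNReal

/-- The resolvent sequence of a non-negative kernel `k` with respect to a measure `μ`
on a set equipped with a relation `r` (interpreted as a preorder `r s t ↔ s ≤ t`):
`res r μ k 0 = k` corresponds to `R_{k,μ,1}` and
`res r μ k (n+1) t s = ∫_{[s,t]} k t u * res r μ k n u s ∂μ` corresponds to `R_{k,μ,n+2}`. -/
noncomputable def res {I : Type*} [MeasurableSpace I] (r : I → I → Prop)
    (μ : Measure I) (k : I → I → ℝ≥0∞) : ℕ → I → I → ℝ≥0∞
  | 0, t, s => k t s
  | n + 1, t, s => ∫⁻ u in {u : I | r s u ∧ r u t}, k t u * res r μ k n u s ∂μ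

section Aux

variable {I : Type*} [MeasurableSpace I] [Preorder I]

lemma measSet_le (hΔ : MeasurableSet {q : I × I | q.2 ≤ q.1}) (t : I) :
    MeasurableSet {s : I | s ≤ t} :=
  (measurable_const.prodMk measurable_id) hΔ

lemma measSet_ge (hΔ : MeasurableSet {q : I × I | q.2 ≤ q.1}) (a : I) :
    MeasurableSet {u : I | a ≤ u} :=
  (measurable_id.prodMk measurable_const) hΔ

lemma measSet_Icc (hΔ : MeasurableSet {q : I × I | q.2 ≤ q.1}) (a b : I) :
    MeasurableSet {u : I | a ≤ u ∧ u ≤ b} :=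
  (measSet_ge hΔ a).inter (measSet_le hΔ b)

lemma res_meas (hΔ : MeasurableSet {q : I × I | q.2 ≤ q.1})
    (μ : Measure I) [SigmaFinite μ] (K : I → I → ℝ≥0∞)
    (hK : Measurable fun q : I × I => K q.1 q.2) :
    ∀ n, Measurable fun q : I × I => res (· ≤ ·) μ K n q.1 q.2
  | 0 => hK
  | n + 1 => by
    have ih := res_meas hΔ μ K hK n
    have hset : MeasurableSet {p : (I × I) × I | p.1.2 ≤ p.2 ∧ p.2 ≤ p.1.1} :=
      ((measurable_snd.prodMk (measurable_snd.comp measurable_fst)) hΔ).inter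
        (((measurable_fst.comp measurable_fst).prodMk measurable_snd) hΔ)
    have hfun : Measurable fun p : (I × I) × I =>
        K p.1.1 p.2 * res (· ≤ ·) μ K n p.2 p.1.2 :=
      (hK.comp ((measurable_fst.comp measurable_fst).prodMk measurable_snd)).mul
        (ih.comp (measurable_snd.prodMk (measurable_snd.comp measurable_fst)))
    have heq : (fun q : I × I => res (· ≤ ·) μ K (n + 1) q.1 q.2)
        = fun q : I × I => ∫⁻ u,
            ({p : (I × I) × I | p.1.2 ≤ p.2 ∧ p.2 ≤ p.1.1}.indicator
              (fun p => K p.1.1 p.2 * res (· ≤ ·) μ K n p.2 p.1.2)) (q, u) ∂μ := by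
      funext q
      show (∫⁻ u in {u : I | q.2 ≤ u ∧ u ≤ q.1},
          K q.1 u * res (· ≤ ·) μ K n u q.2 ∂μ) = _
      rw [← lintegral_indicator (measSet_Icc hΔ q.2 q.1)]
      refine lintegral_congr fun u => ?_
      by_cases h : q.2 ≤ u ∧ u ≤ q.1
      · rw [Set.indicator_of_mem (show u ∈ {u : I | q.2 ≤ u ∧ u ≤ q.1} from h),
          Set.indicator_of_mem
            (show (q, u) ∈ {p : (I × I) × I | p.1.2 ≤ p.2 ∧ p.2 ≤ p.1.1} from h)]
      · rw [Set.indicator_of_notMem (show u ∉ {u : I | q.2 ≤ u ∧ u ≤ q.1} from h),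
          Set.indicator_of_notMem
            (show (q, u) ∉ {p : (I × I) × I | p.1.2 ≤ p.2 ∧ p.2 ≤ p.1.1} from h)]
    rw [heq]
    exact Measurable.lintegral_prod_right (hfun.indicator hset)

/-- Measurability of `t ↦ ∫⁻ s in {s | s ≤ t}, h (t, s) ∂μ`. -/
lemma meas_setLIntegral (hΔ : MeasurableSet {q : I × I | q.2 ≤ q.1})
    (μ : Measure I) [SigmaFinite μ] (h : I × I → ℝ≥0∞) (hh : Measurable h) :
    Measurable fun t => ∫⁻ s in {s : I | s ≤ t}, h (t, s) ∂μ := by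
  have heq : (fun t => ∫⁻ s in {s : I | s ≤ t}, h (t, s) ∂μ)
      = fun t => ∫⁻ s, ({q : I × I | q.2 ≤ q.1}.indicator h) (t, s) ∂μ := by
    funext t
    rw [← lintegral_indicator (measSet_le hΔ t)]
    refine lintegral_congr fun s => ?_
    by_cases hs : s ≤ t
    · rw [Set.indicator_of_mem (show s ∈ {s : I | s ≤ t} from hs),
        Set.indicator_of_mem (show (t, s) ∈ {q : I × I | q.2 ≤ q.1} from hs)]
    · rw [Set.indicator_of_notMem (show s ∉ {s : I | s ≤ t} from hs),
        Set.indicator_of_notMem (show (t, s) ∉ {q : I × I | q.2 ≤ q.1} from hs)]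
  rw [heq]
  exact Measurable.lintegral_prod_right (hh.indicator hΔ)

lemma res_congr (hΔ : MeasurableSet {q : I × I | q.2 ≤ q.1})
    (μ : Measure I) (k K : I → I → ℝ≥0∞) (hkK : ∀ t s : I, s ≤ t → k t s = K t s) :
    ∀ n (t s : I), s ≤ t → res (· ≤ ·) μ k n t s = res (· ≤ ·) μ K n t s
  | 0, t, s, h => hkK t s h
  | n + 1, t, s, _ => by
    show (∫⁻ u in {u : I | s ≤ u ∧ u ≤ t}, k t u * res (· ≤ ·) μ k n u s ∂μ)
      = ∫⁻ u in {u : I | s ≤ u ∧ u ≤ t}, K t u * res (· ≤ ·) μ K n u s ∂μ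
    refine setLIntegral_congr_fun (measSet_Icc hΔ s t) (fun u hu => ?_)
    rw [hkK t u hu.2, res_congr hΔ μ k K hkK n u s hu.1]

/-- res vanishes above `t`. -/
lemma res_zero_of_not_le (μ : Measure I) (K : I → I → ℝ≥0∞) (n : ℕ) {t s : I}
    (h : ¬ s ≤ t) : res (· ≤ ·) μ K (n + 1) t s = 0 := by
  have hempty : {u : I | s ≤ u ∧ u ≤ t} = (∅ : Set I) := by
    ext u
    simp only [Set.mem_setOf_eq, Set.mem_empty_iff_false, iff_false, not_and]
    exact fun h1 h2 => h (h1.trans h2)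
  show (∫⁻ u in {u : I | s ≤ u ∧ u ≤ t}, K t u * res (· ≤ ·) μ K n u s ∂μ) = 0
  rw [hempty]
  simp

/-- The key Fubini step. -/
lemma res_fubini (hΔ : MeasurableSet {q : I × I | q.2 ≤ q.1})
    (μ : Measure I) [SigmaFinite μ] (K : I → I → ℝ≥0∞)
    (hK : Measurable fun q : I × I => K q.1 q.2)
    (f : I → ℝ≥0∞) (hf : Measurable f) (n : ℕ) (t : I) :
    ∫⁻ s in {s : I | s ≤ t}, K t s *
        ∫⁻ s' in {s' : I | s' ≤ s}, res (· ≤ ·) μ K n s s' * f s' ∂μ ∂μ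
      = ∫⁻ s' in {s' : I | s' ≤ t}, res (· ≤ ·) μ K (n + 1) t s' * f s' ∂μ := by
  have Rm := res_meas hΔ μ K hK n
  set A : Set (I × I) := {q : I × I | q.2 ≤ q.1 ∧ q.1 ≤ t} with hA
  have hAset : MeasurableSet A := by
    have h2 : MeasurableSet {q : I × I | q.1 ≤ t} :=
      (measurable_const.prodMk measurable_fst) hΔ
    exact hΔ.inter h2
  set G : I → I → ℝ≥0∞ := fun s s' =>
    (A.indicator (fun q : I × I => K t q.1 * (res (· ≤ ·) μ K n q.1 q.2 * f q.2))) (s, s')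
    with hG
  have hGmeas : Measurable (Function.uncurry G) := by
    apply Measurable.indicator _ hAset
    exact ((hK.comp (measurable_const.prodMk measurable_fst)).mul
      (Rm.mul (hf.comp measurable_snd)))
  -- step 1 : LHS = iterated integral of G
  have h1 : (∫⁻ s in {s : I | s ≤ t}, K t s *
        ∫⁻ s' in {s' : I | s' ≤ s}, res (· ≤ ·) μ K n s s' * f s' ∂μ ∂μ)
      = ∫⁻ s, ∫⁻ s', G s s' ∂μ ∂μ := by
    rw [← lintegral_indicator (measSet_le hΔ t)]
    congr 1
    funext s
    by_cases hs : s ≤ t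
    · rw [Set.indicator_of_mem (show s ∈ {s : I | s ≤ t} from hs), ← lintegral_indicator (measSet_le hΔ s),
        ← lintegral_const_mul]
      · congr 1
        funext s'
        by_cases hs' : s' ≤ s
        · simp [hG, hA, Set.indicator, hs, hs', mul_assoc]
        · simp [hG, hA, Set.indicator, hs, hs']
      · exact ((Rm.comp (measurable_const.prodMk measurable_id)).mul hf).indicator
          (measSet_le hΔ s)
    · rw [Set.indicator_of_notMem (show s ∉ {s : I | s ≤ t} from hs)]
      symm
      have : ∀ s', G s s' = 0 := by
        intro s'
        simp [hG, hA, Set.indicator, hs]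
      simp [this]
  -- step 2 : swap
  have h2 : (∫⁻ s, ∫⁻ s', G s s' ∂μ ∂μ) = ∫⁻ s', ∫⁻ s, G s s' ∂μ ∂μ :=
    lintegral_lintegral_swap hGmeas.aemeasurable
  -- step 3 : inner integral is the resolvent
  have h3 : ∀ s', (∫⁻ s, G s s' ∂μ) = res (· ≤ ·) μ K (n + 1) t s' * f s' := by
    intro s'
    have heq : (fun s => G s s')
        = {s : I | s' ≤ s ∧ s ≤ t}.indicator
            (fun s => K t s * res (· ≤ ·) μ K n s s' * f s') := by
      funext s
      by_cases h : s' ≤ s ∧ s ≤ t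
      · simp [hG, hA, Set.indicator, h.1, h.2, mul_assoc]
      · rw [not_and_or] at h
        rcases h with h | h <;> simp [hG, hA, Set.indicator, h]
    rw [heq, lintegral_indicator (measSet_Icc hΔ s' t), lintegral_mul_const]
    · rfl
    · exact (hK.comp (measurable_const.prodMk measurable_id)).mul
        (Rm.comp (measurable_id.prodMk measurable_const))
  rw [h1, h2]
  simp only [h3]
  rw [← lintegral_indicator (measSet_le hΔ t)]
  congr 1
  funext s'
  by_cases h : s' ≤ t
  · simp [Set.indicator, h]
  · simp [Set.indicator, h, res_zero_of_not_le μ K n h]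

/-- Minkowski inequality for finite sums. -/
lemma lintegral_Lp_sum_le {α : Type*} [MeasurableSpace α] (ν : Measure α) {p : ℝ}
    (hp : 1 ≤ p) (f : ℕ → α → ℝ≥0∞) (hf : ∀ i, AEMeasurable (f i) ν) (m : ℕ) :
    (∫⁻ a, (∑ i ∈ Finset.range m, f i a) ^ p ∂ν) ^ (1 / p)
      ≤ ∑ i ∈ Finset.range m, (∫⁻ a, f i a ^ p ∂ν) ^ (1 / p) := by
  have hp0 : (0 : ℝ) < p := lt_of_lt_of_le one_pos hp
  induction m with
  | zero =>
      simp only [Finset.sum_range_zero, ENNReal.zero_rpow_of_pos hp0, lintegral_zero]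
      rw [ENNReal.zero_rpow_of_pos (one_div_pos.mpr hp0)]
  | succ m ih =>
      have hsum : AEMeasurable (fun a => ∑ i ∈ Finset.range m, f i a) ν :=
        Finset.aemeasurable_fun_sum _ fun i _ => hf i
      calc (∫⁻ a, (∑ i ∈ Finset.range (m + 1), f i a) ^ p ∂ν) ^ (1 / p)
          = (∫⁻ a, ((fun a => ∑ i ∈ Finset.range m, f i a) + f m) a ^ p ∂ν) ^ (1 / p) := by
            simp [Finset.sum_range_succ, Pi.add_apply]
        _ ≤ (∫⁻ a, (∑ i ∈ Finset.range m, f i a) ^ p ∂ν) ^ (1 / p)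
              + (∫⁻ a, f m a ^ p ∂ν) ^ (1 / p) :=
            ENNReal.lintegral_Lp_add_le hsum (hf m) hp
        _ ≤ (∑ i ∈ Finset.range m, (∫⁻ a, f i a ^ p ∂ν) ^ (1 / p))
              + (∫⁻ a, f m a ^ p ∂ν) ^ (1 / p) := add_le_add_left ih _
        _ = ∑ i ∈ Finset.range (m + 1), (∫⁻ a, f i a ^ p ∂ν) ^ (1 / p) :=
            (Finset.sum_range_succ _ _).symm

lemma lintegral_Lp_add_le' {α : Type*} [MeasurableSpace α] (ν : Measure α) {p : ℝ}
    (hp : 1 ≤ p) (f g : α → ℝ≥0∞) (hf : AEMeasurable f ν) (hg : AEMeasurable g ν) :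
    (∫⁻ a, (f a + g a) ^ p ∂ν) ^ (1 / p)
      ≤ (∫⁻ a, f a ^ p ∂ν) ^ (1 / p) + (∫⁻ a, g a ^ p ∂ν) ^ (1 / p) :=
  ENNReal.lintegral_Lp_add_le hf hg hp

end Aux

/-- **Resolvent sequence inequality** (Proposition 1 of the paper): if `J` has full
measure and `u (n+1) t ≤ v t + (∫_{I(t)} k(t,s)^p (u n s)^p μ(ds))^{1/p}` on `J`, then
`u (n+1) t ≤ v t + ∑_{i=1}^{n} (∫_{I(t)} R_{k^p,μ,i}(t,s) v(s)^p μ(ds))^{1/p}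
  + (∫_{I(t)} R_{k^p,μ,n+1}(t,s) (u 0 s)^p μ(ds))^{1/p}` on `J`
(the index `n` here is shifted by one with respect to the paper: `res … i = R_{·,i+1}`). -/
theorem resolvent_sequence_inequality {I : Type*} [MeasurableSpace I] [Preorder I]
    (hΔ : MeasurableSet {q : I × I | q.2 ≤ q.1})
    (μ : Measure I) [SigmaFinite μ]
    (k : I → I → ℝ≥0∞)
    (hk : Measurable fun q : {q : I × I // q.2 ≤ q.1} => k q.1.1 q.1.2)
    (p : ℝ) (hp : 1 ≤ p)
    (J : Set I) (hJ : μ Jᶜ = 0)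
    (u : ℕ → I → ℝ≥0∞) (hu : ∀ n, Measurable (u n))
    (v : I → ℝ≥0∞) (hv : Measurable v)
    (hrec : ∀ n : ℕ, ∀ t ∈ J,
      u (n + 1) t ≤ v t + (∫⁻ s in {s : I | s ≤ t}, k t s ^ p * u n s ^ p ∂μ) ^ (1 / p)) :
    ∀ n : ℕ, ∀ t ∈ J,
      u (n + 1) t ≤ v t
        + ∑ i ∈ Finset.range n,
            (∫⁻ s in {s : I | s ≤ t},
              res (· ≤ ·) μ (fun a b => k a b ^ p) i t s * v s ^ p ∂μ) ^ (1 / p)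
        + (∫⁻ s in {s : I | s ≤ t},
            res (· ≤ ·) μ (fun a b => k a b ^ p) n t s * u 0 s ^ p ∂μ) ^ (1 / p) := by
  classical
  have hp0 : (0 : ℝ) < p := lt_of_lt_of_le one_pos hp
  have hp0' : (0 : ℝ) ≤ p := hp0.le
  have hpinv : 1 / p * p = 1 := one_div_mul_cancel (ne_of_gt hp0)
  have hpinv0 : (0 : ℝ) ≤ 1 / p := (one_div_pos.mpr hp0).le
  set K : I → I → ℝ≥0∞ := fun t s => if _ : s ≤ t then k t s ^ p else 0 with hKdef
  have hKk : ∀ t s : I, s ≤ t → k t s ^ p = K t s := by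
    intro t s h
    simp only [hKdef]
    rw [dif_pos h]
  have hrpowm : ∀ y : ℝ, Measurable fun x : ℝ≥0∞ => x ^ y := fun y =>
    (ENNReal.continuous_rpow_const (y := y)).measurable
  have hK : Measurable fun q : I × I => K q.1 q.2 := by
    simp only [hKdef]
    exact Measurable.dite (s := {q : I × I | q.2 ≤ q.1})
      ((hrpowm p).comp hk) measurable_const hΔ
  have Rm : ∀ n, Measurable fun q : I × I => res (· ≤ ·) μ K n q.1 q.2 := res_meas hΔ μ K hK
  have hv' : Measurable fun s => v s ^ p := (hrpowm p).comp hv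
  have hu0' : Measurable fun s => u 0 s ^ p :=
    (hrpowm p).comp (hu 0)
  set A : ℕ → I → ℝ≥0∞ := fun i t =>
    (∫⁻ s in {s : I | s ≤ t}, res (· ≤ ·) μ K i t s * v s ^ p ∂μ) ^ (1 / p) with hAdef
  set B : ℕ → I → ℝ≥0∞ := fun i t =>
    (∫⁻ s in {s : I | s ≤ t}, res (· ≤ ·) μ K i t s * u 0 s ^ p ∂μ) ^ (1 / p) with hBdef
  have hA : ∀ i, Measurable (A i) := by
    intro i
    simp only [hAdef]
    exact (hrpowm (1 / p)).comp
      (meas_setLIntegral hΔ μ (fun q => res (· ≤ ·) μ K i q.1 q.2 * v q.2 ^ p)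
        ((Rm i).mul (hv'.comp measurable_snd)))
  have hB : ∀ i, Measurable (B i) := by
    intro i
    simp only [hBdef]
    exact (hrpowm (1 / p)).comp
      (meas_setLIntegral hΔ μ (fun q => res (· ≤ ·) μ K i q.1 q.2 * u 0 q.2 ^ p)
        ((Rm i).mul (hu0'.comp measurable_snd)))
  have hJae : ∀ᵐ s ∂μ, s ∈ J := by
    rw [ae_iff]
    rw [← Set.compl_def]
    exact hJ
  have key : ∀ n : ℕ, ∀ t ∈ J,
      u (n + 1) t ≤ v t + ∑ i ∈ Finset.range n, A i t + B n t := by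
    intro n
    induction n with
    | zero =>
      intro t ht
      have h0 := hrec 0 t ht
      have e : (∫⁻ s in {s : I | s ≤ t}, k t s ^ p * u 0 s ^ p ∂μ)
          = ∫⁻ s in {s : I | s ≤ t}, res (· ≤ ·) μ K 0 t s * u 0 s ^ p ∂μ :=
        setLIntegral_congr_fun (measSet_le hΔ t) (fun s hs => by
          rw [show res (· ≤ ·) μ K 0 t s = K t s from rfl, hKk t s hs])
      rw [e] at h0
      simpa [hBdef] using h0
    | succ n ih =>
      intro t ht
      set W : I → ℝ≥0∞ := fun s => v s + ∑ i ∈ Finset.range n, A i s + B n s with hWdef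
      have hIH : ∀ᵐ s ∂(μ.restrict {s : I | s ≤ t}), u (n + 1) s ≤ W s :=
        ae_restrict_of_ae (hJae.mono fun s hs => by rw [hWdef]; exact ih s hs)
      have hgm : Measurable fun s => K t s ^ (1 / p) :=
        (hrpowm (1 / p)).comp (hK.comp (measurable_const.prodMk measurable_id))
      have hgp : ∀ (s : I) (x : ℝ≥0∞), K t s * x ^ p = (K t s ^ (1 / p) * x) ^ p := by
        intro s x
        rw [ENNReal.mul_rpow_of_nonneg _ _ hp0', ← ENNReal.rpow_mul, hpinv, ENNReal.rpow_one]
      have hstep2 : (∫⁻ s in {s : I | s ≤ t}, K t s * u (n + 1) s ^ p ∂μ) ^ (1 / p)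
          ≤ (∫⁻ s in {s : I | s ≤ t}, (K t s ^ (1 / p) * W s) ^ p ∂μ) ^ (1 / p) := by
        refine ENNReal.rpow_le_rpow ?_ hpinv0
        refine lintegral_mono_ae (hIH.mono fun s hs => ?_)
        rw [← hgp s (W s)]
        exact mul_le_mul_right (ENNReal.rpow_le_rpow hs hp0') _
      have hApow : ∀ i (s : I), A i s ^ p
          = ∫⁻ s' in {s' : I | s' ≤ s}, res (· ≤ ·) μ K i s s' * v s' ^ p ∂μ := by
        intro i s
        simp only [hAdef]
        rw [← ENNReal.rpow_mul, hpinv, ENNReal.rpow_one]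
      have hBpow : ∀ i (s : I), B i s ^ p
          = ∫⁻ s' in {s' : I | s' ≤ s}, res (· ≤ ·) μ K i s s' * u 0 s' ^ p ∂μ := by
        intro i s
        simp only [hBdef]
        rw [← ENNReal.rpow_mul, hpinv, ENNReal.rpow_one]
      have htermv : (∫⁻ s in {s : I | s ≤ t}, (K t s ^ (1 / p) * v s) ^ p ∂μ) ^ (1 / p)
          = A 0 t := by
        simp only [hAdef]
        congr 1
        refine lintegral_congr fun s => ?_
        rw [← hgp s (v s)]
        rfl
      have htermA : ∀ i,
          (∫⁻ s in {s : I | s ≤ t}, (K t s ^ (1 / p) * A i s) ^ p ∂μ) ^ (1 / p)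
            = A (i + 1) t := by
        intro i
        have h1 : (∫⁻ s in {s : I | s ≤ t}, (K t s ^ (1 / p) * A i s) ^ p ∂μ)
            = ∫⁻ s in {s : I | s ≤ t}, K t s *
                ∫⁻ s' in {s' : I | s' ≤ s}, res (· ≤ ·) μ K i s s' * v s' ^ p ∂μ ∂μ :=
          lintegral_congr fun s => by rw [← hgp s (A i s), hApow i s]
        rw [h1, res_fubini hΔ μ K hK (fun s' => v s' ^ p) hv' i t]
      have htermB :
          (∫⁻ s in {s : I | s ≤ t}, (K t s ^ (1 / p) * B n s) ^ p ∂μ) ^ (1 / p)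
            = B (n + 1) t := by
        have h1 : (∫⁻ s in {s : I | s ≤ t}, (K t s ^ (1 / p) * B n s) ^ p ∂μ)
            = ∫⁻ s in {s : I | s ≤ t}, K t s *
                ∫⁻ s' in {s' : I | s' ≤ s}, res (· ≤ ·) μ K n s s' * u 0 s' ^ p ∂μ ∂μ :=
          lintegral_congr fun s => by rw [← hgp s (B n s), hBpow n s]
        rw [h1, res_fubini hΔ μ K hK (fun s' => u 0 s' ^ p) hu0' n t]
      have hsplit : (∫⁻ s in {s : I | s ≤ t}, (K t s ^ (1 / p) * W s) ^ p ∂μ) ^ (1 / p)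
          ≤ (∫⁻ s in {s : I | s ≤ t}, (K t s ^ (1 / p) * v s) ^ p ∂μ) ^ (1 / p)
            + ∑ i ∈ Finset.range n,
                (∫⁻ s in {s : I | s ≤ t}, (K t s ^ (1 / p) * A i s) ^ p ∂μ) ^ (1 / p)
            + (∫⁻ s in {s : I | s ≤ t}, (K t s ^ (1 / p) * B n s) ^ p ∂μ) ^ (1 / p) := by
        calc (∫⁻ s in {s : I | s ≤ t}, (K t s ^ (1 / p) * W s) ^ p ∂μ) ^ (1 / p)
            = (∫⁻ s in {s : I | s ≤ t},
                ((K t s ^ (1 / p) * v s + ∑ i ∈ Finset.range n, K t s ^ (1 / p) * A i s)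
                  + K t s ^ (1 / p) * B n s) ^ p ∂μ) ^ (1 / p) := by
              congr 1
              refine lintegral_congr fun s => ?_
              congr 1
              simp only [hWdef]
              rw [mul_add, mul_add, Finset.mul_sum]
          _ ≤ (∫⁻ s in {s : I | s ≤ t},
                (K t s ^ (1 / p) * v s + ∑ i ∈ Finset.range n, K t s ^ (1 / p) * A i s) ^ p
                  ∂μ) ^ (1 / p)
              + (∫⁻ s in {s : I | s ≤ t}, (K t s ^ (1 / p) * B n s) ^ p ∂μ) ^ (1 / p) :=
            lintegral_Lp_add_le' _ hp _ _
              (((hgm.mul hv).add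
                (Finset.measurable_sum _ fun i _ => hgm.mul (hA i))).aemeasurable)
              ((hgm.mul (hB n)).aemeasurable)
          _ ≤ ((∫⁻ s in {s : I | s ≤ t}, (K t s ^ (1 / p) * v s) ^ p ∂μ) ^ (1 / p)
              + ∑ i ∈ Finset.range n,
                  (∫⁻ s in {s : I | s ≤ t}, (K t s ^ (1 / p) * A i s) ^ p ∂μ) ^ (1 / p))
              + (∫⁻ s in {s : I | s ≤ t}, (K t s ^ (1 / p) * B n s) ^ p ∂μ) ^ (1 / p) := by
            refine add_le_add_left ?_ _
            refine le_trans (lintegral_Lp_add_le' _ hp _ _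
              ((hgm.mul hv).aemeasurable)
              ((Finset.measurable_sum _ fun i _ => hgm.mul (hA i)).aemeasurable)) ?_
            refine add_le_add_right ?_ _
            exact lintegral_Lp_sum_le _ hp (fun i s => K t s ^ (1 / p) * A i s)
              (fun i => (hgm.mul (hA i)).aemeasurable) n
      calc u (n + 1 + 1) t
          ≤ v t + (∫⁻ s in {s : I | s ≤ t}, k t s ^ p * u (n + 1) s ^ p ∂μ) ^ (1 / p) :=
            hrec (n + 1) t ht
        _ = v t + (∫⁻ s in {s : I | s ≤ t}, K t s * u (n + 1) s ^ p ∂μ) ^ (1 / p) := by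
            have e : (∫⁻ s in {s : I | s ≤ t}, k t s ^ p * u (n + 1) s ^ p ∂μ)
                = ∫⁻ s in {s : I | s ≤ t}, K t s * u (n + 1) s ^ p ∂μ :=
              setLIntegral_congr_fun (measSet_le hΔ t)
                (fun s hs => by rw [hKk t s hs])
            rw [e]
        _ ≤ v t + (∫⁻ s in {s : I | s ≤ t}, (K t s ^ (1 / p) * W s) ^ p ∂μ) ^ (1 / p) :=
            add_le_add_right hstep2 _
        _ ≤ v t + ((∫⁻ s in {s : I | s ≤ t}, (K t s ^ (1 / p) * v s) ^ p ∂μ) ^ (1 / p)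
              + ∑ i ∈ Finset.range n,
                  (∫⁻ s in {s : I | s ≤ t}, (K t s ^ (1 / p) * A i s) ^ p ∂μ) ^ (1 / p)
              + (∫⁻ s in {s : I | s ≤ t}, (K t s ^ (1 / p) * B n s) ^ p ∂μ) ^ (1 / p)) :=
            add_le_add_right hsplit _
        _ = v t + (A 0 t + ∑ i ∈ Finset.range n, A (i + 1) t + B (n + 1) t) := by
            rw [htermv, htermB,
              show (∑ i ∈ Finset.range n,
                  (∫⁻ s in {s : I | s ≤ t}, (K t s ^ (1 / p) * A i s) ^ p ∂μ) ^ (1 / p))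
                = ∑ i ∈ Finset.range n, A (i + 1) t from
                Finset.sum_congr rfl fun i _ => htermA i]
        _ = v t + ∑ i ∈ Finset.range (n + 1), A i t + B (n + 1) t := by
            rw [Finset.sum_range_succ']
            ring
  intro n t ht
  have eresv : ∀ i, (∫⁻ s in {s : I | s ≤ t}, res (· ≤ ·) μ K i t s * v s ^ p ∂μ)
      = ∫⁻ s in {s : I | s ≤ t},
          res (· ≤ ·) μ (fun a b => k a b ^ p) i t s * v s ^ p ∂μ := by
    intro i
    refine setLIntegral_congr_fun (measSet_le hΔ t) (fun s hs => ?_)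
    rw [res_congr hΔ μ (fun a b => k a b ^ p) K hKk i t s hs]
  have eresu : ∀ i, (∫⁻ s in {s : I | s ≤ t}, res (· ≤ ·) μ K i t s * u 0 s ^ p ∂μ)
      = ∫⁻ s in {s : I | s ≤ t},
          res (· ≤ ·) μ (fun a b => k a b ^ p) i t s * u 0 s ^ p ∂μ := by
    intro i
    refine setLIntegral_congr_fun (measSet_le hΔ t) (fun s hs => ?_)
    rw [res_congr hΔ μ (fun a b => k a b ^ p) K hKk i t s hs]
  refine le_trans (key n t ht) (le_of_eq ?_)
  simp only [hAdef, hBdef]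
  rw [eresu n]
  congr 1
  congr 1
  exact Finset.sum_congr rfl fun i _ => by rw [eresv i]
end

section
/- For any non-negative kernel k on I, a σ-finite measure μ on 𝓘 and all m, n ≥ 1 and s, t ∈ I with s ≤ t, the resolvent sequence satisfies the semigroup identity R_{k,μ,m+n}(t,s) = ∫_{[s,t]} R_{k,μ,m}(t,s̃) R_{k,μ,n}(s̃,s) μ(ds̃). -/
set_option linter.unusedSectionVars false

open MeasureTheory ENNReal

/-- Extension of the resolvent sequence to all of `I × I`, vanishing off the triangular set. -/
noncomputable def resExt {I : Type*} [MeasurableSpace I] [Preorder I]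
    (μ : Measure I) (k : I → I → ℝ≥0∞) (n : ℕ) (q : I × I) : ℝ≥0∞ :=
  Set.indicator {q : I × I | q.2 ≤ q.1} (fun q => res (· ≤ ·) μ k n q.1 q.2) q

section Aux

variable {I : Type*} [MeasurableSpace I] [Preorder I]
    (hΔ : MeasurableSet {q : I × I | q.2 ≤ q.1})
    (μ : Measure I) [SigmaFinite μ]
    (k : I → I → ℝ≥0∞)
    (hk : Measurable fun q : {q : I × I // q.2 ≤ q.1} => k q.1.1 q.1.2)

lemma resExt_apply_of_le {q : I × I} (h : q.2 ≤ q.1) (n : ℕ) :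
    resExt μ k n q = res (· ≤ ·) μ k n q.1 q.2 :=
  Set.indicator_of_mem (show q ∈ {q : I × I | q.2 ≤ q.1} from h) _

lemma resExt_apply_of_not_le {q : I × I} (h : ¬ q.2 ≤ q.1) (n : ℕ) :
    resExt μ k n q = 0 :=
  Set.indicator_of_notMem (show q ∉ {q : I × I | q.2 ≤ q.1} from h) _

lemma resExt_of_le {s t : I} (h : s ≤ t) (n : ℕ) :
    resExt μ k n (t, s) = res (· ≤ ·) μ k n t s :=
  Set.indicator_of_mem (show ((t, s) : I × I) ∈ {q : I × I | q.2 ≤ q.1} from h) _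

lemma resExt_of_not_le {s t : I} (h : ¬ s ≤ t) (n : ℕ) :
    resExt μ k n (t, s) = 0 :=
  Set.indicator_of_notMem (show ((t, s) : I × I) ∉ {q : I × I | q.2 ≤ q.1} from h) _

include hΔ in
lemma measS (s t : I) : MeasurableSet {u : I | s ≤ u ∧ u ≤ t} := by
  have h1 : {u : I | s ≤ u} = (fun u : I => ((u, s) : I × I)) ⁻¹' {q : I × I | q.2 ≤ q.1} := rfl
  have h2 : {u : I | u ≤ t} = (fun u : I => ((t, u) : I × I)) ⁻¹' {q : I × I | q.2 ≤ q.1} := rfl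
  have m1 : MeasurableSet {u : I | s ≤ u} := by
    rw [h1]; exact (measurable_id.prodMk measurable_const) hΔ
  have m2 : MeasurableSet {u : I | u ≤ t} := by
    rw [h2]; exact (measurable_const.prodMk measurable_id) hΔ
  exact m1.inter m2

include hΔ hk in
lemma measurable_resExt_zero : Measurable (resExt μ k 0) := by
  have hemb : MeasurableEmbedding (Subtype.val : {q : I × I // q.2 ≤ q.1} → I × I) :=
    MeasurableEmbedding.subtype_coe hΔ
  have hext : Measurable (Function.extend (Subtype.val : {q : I × I // q.2 ≤ q.1} → I × I)
      (fun q => k q.1.1 q.1.2) (fun _ => 0)) :=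
    hemb.measurable_extend hk measurable_const
  have : resExt μ k 0 = Function.extend (Subtype.val : {q : I × I // q.2 ≤ q.1} → I × I)
      (fun q => k q.1.1 q.1.2) (fun _ => 0) := by
    funext q
    by_cases h : q.2 ≤ q.1
    · have he := Subtype.val_injective.extend_apply
        (f := (Subtype.val : {q : I × I // q.2 ≤ q.1} → I × I))
        (g := fun q => k q.1.1 q.1.2) (e' := fun _ => 0) ⟨q, h⟩
      rw [resExt_apply_of_le μ k h 0]
      rw [show ((⟨q, h⟩ : {q : I × I // q.2 ≤ q.1}) : I × I) = q from rfl] at he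
      rw [he]
      rfl
    · rw [Function.extend_apply']
      · exact resExt_apply_of_not_le μ k h 0
      · rintro ⟨a, rfl⟩; exact h a.2
  rw [this]; exact hext

include hΔ in
/-- `res (n+1)` as a set integral of the extended functions. -/
lemma res_succ_eq (n : ℕ) (s t : I) :
    res (· ≤ ·) μ k (n + 1) t s
      = ∫⁻ u in {u : I | s ≤ u ∧ u ≤ t}, resExt μ k 0 (t, u) * resExt μ k n (u, s) ∂μ := by
  show (∫⁻ u in {u : I | s ≤ u ∧ u ≤ t}, k t u * res (· ≤ ·) μ k n u s ∂μ) = _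
  refine setLIntegral_congr_fun (measS hΔ s t) (fun u hu => ?_)
  obtain ⟨h1, h2⟩ := hu
  rw [resExt_of_le μ k h2 0, resExt_of_le μ k h1 n]
  rfl

include hΔ hk in
lemma measurable_resExt (n : ℕ) : Measurable (resExt μ k n) := by
  induction n with
  | zero => exact measurable_resExt_zero hΔ μ k hk
  | succ n ih =>
    set T : Set ((I × I) × I) := {p | p.1.2 ≤ p.2 ∧ p.2 ≤ p.1.1} with hT
    have hTm : MeasurableSet T := by
      have h1 : MeasurableSet {p : (I × I) × I | p.1.2 ≤ p.2} :=
        (measurable_snd.prodMk (measurable_snd.comp measurable_fst)) hΔ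
      have h2 : MeasurableSet {p : (I × I) × I | p.2 ≤ p.1.1} :=
        ((measurable_fst.comp measurable_fst).prodMk measurable_snd) hΔ
      exact h1.inter h2
    set G : (I × I) × I → ℝ≥0∞ :=
      fun p => resExt μ k 0 (p.1.1, p.2) * resExt μ k n (p.2, p.1.2) with hG
    have hGm : Measurable G := by
      apply Measurable.mul
      · exact (measurable_resExt_zero hΔ μ k hk).comp
          (((measurable_fst.comp measurable_fst)).prodMk measurable_snd)
      · exact ih.comp (measurable_snd.prodMk (measurable_snd.comp measurable_fst))
    have hFm : Measurable fun q : I × I => ∫⁻ u, T.indicator G (q, u) ∂μ :=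
      Measurable.lintegral_prod_right' (f := T.indicator G) (hGm.indicator hTm)
    have heq : resExt μ k (n + 1)
        = Set.indicator {q : I × I | q.2 ≤ q.1}
            (fun q : I × I => ∫⁻ u, T.indicator G (q, u) ∂μ) := by
      funext q
      classical
      by_cases h : q.2 ≤ q.1
      · rw [resExt_apply_of_le μ k h (n + 1),
          Set.indicator_of_mem (show q ∈ {q : I × I | q.2 ≤ q.1} from h)]
        rw [res_succ_eq hΔ μ k n q.2 q.1]
        rw [← lintegral_indicator (measS hΔ q.2 q.1)]
        refine lintegral_congr fun u => ?_
        rw [Set.indicator_apply, Set.indicator_apply]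
        refine if_congr Iff.rfl rfl rfl
      · rw [resExt_apply_of_not_le μ k h (n + 1),
          Set.indicator_of_notMem (show q ∉ {q : I × I | q.2 ≤ q.1} from h)]
    rw [heq]
    exact hFm.indicator hΔ

end Aux

/-- **Semigroup identity for resolvent sequences**: for all `m, n ≥ 1` (here appearing
as `m + 1` and `n + 1`, i.e. `res … m = R_{·,m+1}`) and all `s ≤ t`,
`R_{k,μ,m+n}(t,s) = ∫_{[s,t]} R_{k,μ,m}(t,u) R_{k,μ,n}(u,s) μ(du)`. -/
theorem resolvent_semigroup {I : Type*} [MeasurableSpace I] [Preorder I]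
    (hΔ : MeasurableSet {q : I × I | q.2 ≤ q.1})
    (μ : Measure I) [SigmaFinite μ]
    (k : I → I → ℝ≥0∞)
    (hk : Measurable fun q : {q : I × I // q.2 ≤ q.1} => k q.1.1 q.1.2) :
    ∀ m n : ℕ, ∀ s t : I, s ≤ t →
      res (· ≤ ·) μ k (m + n + 1) t s
        = ∫⁻ u in {u : I | s ≤ u ∧ u ≤ t},
            res (· ≤ ·) μ k m t u * res (· ≤ ·) μ k n u s ∂μ := by
  intro m
  induction m with
  | zero =>
    intro n s t _
    simp only [Nat.zero_add]
    rfl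
  | succ m ih =>
    intro n s t hst
    -- the joint integrand on pairs (u, v)
    set T : Set (I × I) := {p | s ≤ p.2 ∧ p.2 ≤ p.1 ∧ p.1 ≤ t} with hTdef
    have hTm : MeasurableSet T := by
      have h1 : MeasurableSet {p : I × I | s ≤ p.2} :=
        (measurable_snd.prodMk measurable_const) hΔ
      have h2 : MeasurableSet {p : I × I | p.2 ≤ p.1} := hΔ
      have h3 : MeasurableSet {p : I × I | p.1 ≤ t} :=
        (measurable_const.prodMk measurable_fst) hΔ
      exact h1.inter (h2.inter h3)
    set G : I × I → ℝ≥0∞ := fun p =>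
      resExt μ k 0 (t, p.1) * resExt μ k m (p.1, p.2) * resExt μ k n (p.2, s) with hGdef
    have hGm : Measurable G := by
      refine Measurable.mul (Measurable.mul ?_ ?_) ?_
      · exact (measurable_resExt_zero hΔ μ k hk).comp (measurable_const.prodMk measurable_fst)
      · exact (measurable_resExt hΔ μ k hk m).comp measurable_id
      · exact (measurable_resExt hΔ μ k hk n).comp (measurable_snd.prodMk measurable_const)
    set F : I → I → ℝ≥0∞ := fun u v => T.indicator G (u, v) with hFdef
    have hFm : Measurable (Function.uncurry F) := by
      have : Function.uncurry F = T.indicator G := rfl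
      rw [this]; exact hGm.indicator hTm
    -- Step 1: LHS equals the iterated integral ∫ u ∫ v F u v
    have eq1 : res (· ≤ ·) μ k (m + 1 + n + 1) t s = ∫⁻ u, ∫⁻ v, F u v ∂μ ∂μ := by
      have hidx : m + 1 + n + 1 = (m + n + 1) + 1 := by omega
      rw [hidx]
      show (∫⁻ u in {u : I | s ≤ u ∧ u ≤ t}, k t u * res (· ≤ ·) μ k (m + n + 1) u s ∂μ) = _
      rw [← lintegral_indicator (measS hΔ s t)]
      refine lintegral_congr fun u => ?_
      by_cases hu : s ≤ u ∧ u ≤ t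
      · obtain ⟨hsu, hut⟩ := hu
        rw [Set.indicator_of_mem (show u ∈ {u : I | s ≤ u ∧ u ≤ t} from ⟨hsu, hut⟩)]
        -- compute ∫⁻ v, F u v
        have hFv : ∀ v, F u v
            = Set.indicator {v : I | s ≤ v ∧ v ≤ u} (fun v => G (u, v)) v := by
          intro v
          classical
          show T.indicator G (u, v) = _
          rw [Set.indicator_apply, Set.indicator_apply]
          refine if_congr ?_ rfl rfl
          constructor
          · rintro ⟨h1, h2, _⟩; exact ⟨h1, h2⟩
          · rintro ⟨h1, h2⟩; exact ⟨h1, h2, hut⟩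
        rw [lintegral_congr hFv, lintegral_indicator (measS hΔ s u)]
        have hcongr : (∫⁻ v in {v : I | s ≤ v ∧ v ≤ u}, G (u, v) ∂μ)
            = ∫⁻ v in {v : I | s ≤ v ∧ v ≤ u}, k t u * (resExt μ k m (u, v)
                * resExt μ k n (v, s)) ∂μ := by
          refine setLIntegral_congr_fun (measS hΔ s u) (fun v hv => ?_)
          show resExt μ k 0 (t, u) * resExt μ k m (u, v) * resExt μ k n (v, s) = _
          rw [resExt_of_le μ k hut 0]
          show k t u * _ * _ = _
          ring
        rw [hcongr]
        have hmeas : Measurable fun v => resExt μ k m (u, v) * resExt μ k n (v, s) := by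
          refine Measurable.mul ?_ ?_
          · exact (measurable_resExt hΔ μ k hk m).comp (measurable_const.prodMk measurable_id)
          · exact (measurable_resExt hΔ μ k hk n).comp (measurable_id.prodMk measurable_const)
        rw [lintegral_const_mul _ hmeas]
        congr 1
        have hback : (∫⁻ v in {v : I | s ≤ v ∧ v ≤ u},
              resExt μ k m (u, v) * resExt μ k n (v, s) ∂μ)
            = ∫⁻ v in {v : I | s ≤ v ∧ v ≤ u},
                res (· ≤ ·) μ k m u v * res (· ≤ ·) μ k n v s ∂μ := by
          refine setLIntegral_congr_fun (measS hΔ s u) (fun v hv => ?_)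
          obtain ⟨hsv, hvu⟩ := hv
          rw [resExt_of_le μ k hvu m, resExt_of_le μ k hsv n]
        rw [hback]
        exact ih n s u hsu
      · rw [Set.indicator_of_notMem (show u ∉ {u : I | s ≤ u ∧ u ≤ t} from hu)]
        have hz : ∀ v, F u v = 0 := by
          intro v
          refine Set.indicator_of_notMem
            (show (u, v) ∉ T from fun h => hu ⟨le_trans h.1 h.2.1, h.2.2⟩) _
        rw [lintegral_congr hz]
        simp
    -- Step 2: RHS equals the iterated integral ∫ v ∫ u F u v
    have eq2 : (∫⁻ u in {u : I | s ≤ u ∧ u ≤ t},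
          res (· ≤ ·) μ k (m + 1) t u * res (· ≤ ·) μ k n u s ∂μ)
        = ∫⁻ v, ∫⁻ u, F u v ∂μ ∂μ := by
      rw [← lintegral_indicator (measS hΔ s t)]
      refine lintegral_congr fun v => ?_
      by_cases hv : s ≤ v ∧ v ≤ t
      · obtain ⟨hsv, hvt⟩ := hv
        rw [Set.indicator_of_mem (show v ∈ {u : I | s ≤ u ∧ u ≤ t} from ⟨hsv, hvt⟩)]
        have hFu : ∀ u, F u v
            = Set.indicator {u : I | v ≤ u ∧ u ≤ t} (fun u => G (u, v)) u := by
          intro u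
          classical
          show T.indicator G (u, v) = _
          rw [Set.indicator_apply, Set.indicator_apply]
          refine if_congr ?_ rfl rfl
          constructor
          · rintro ⟨_, h2, h3⟩; exact ⟨h2, h3⟩
          · rintro ⟨h2, h3⟩; exact ⟨hsv, h2, h3⟩
        rw [lintegral_congr hFu, lintegral_indicator (measS hΔ v t)]
        have hcongr : (∫⁻ u in {u : I | v ≤ u ∧ u ≤ t}, G (u, v) ∂μ)
            = ∫⁻ u in {u : I | v ≤ u ∧ u ≤ t},
                (resExt μ k 0 (t, u) * resExt μ k m (u, v)) * res (· ≤ ·) μ k n v s ∂μ := by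
          refine setLIntegral_congr_fun (measS hΔ v t) (fun u hu => ?_)
          show resExt μ k 0 (t, u) * resExt μ k m (u, v) * resExt μ k n (v, s) = _
          rw [resExt_of_le μ k hsv n]
        rw [hcongr]
        have hmeas : Measurable fun u => resExt μ k 0 (t, u) * resExt μ k m (u, v) := by
          refine Measurable.mul ?_ ?_
          · exact (measurable_resExt_zero hΔ μ k hk).comp (measurable_const.prodMk measurable_id)
          · exact (measurable_resExt hΔ μ k hk m).comp (measurable_id.prodMk measurable_const)
        rw [lintegral_mul_const _ hmeas]
        congr 1
        have hback : (∫⁻ u in {u : I | v ≤ u ∧ u ≤ t},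
              resExt μ k 0 (t, u) * resExt μ k m (u, v) ∂μ)
            = ∫⁻ u in {u : I | v ≤ u ∧ u ≤ t}, k t u * res (· ≤ ·) μ k m u v ∂μ := by
          refine setLIntegral_congr_fun (measS hΔ v t) (fun u hu => ?_)
          obtain ⟨hvu, hut⟩ := hu
          rw [resExt_of_le μ k hut 0, resExt_of_le μ k hvu m]
          rfl
        rw [hback]
        rfl
      · rw [Set.indicator_of_notMem (show v ∉ {u : I | s ≤ u ∧ u ≤ t} from hv)]
        have hz : ∀ u, F u v = 0 := by
          intro u
          refine Set.indicator_of_notMem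
            (show (u, v) ∉ T from fun h => hv ⟨h.1, le_trans h.2.1 h.2.2⟩) _
        rw [lintegral_congr hz]
        simp
    rw [eq1, eq2, lintegral_lintegral_swap hFm.aemeasurable]
end

section
/- For any non-negative kernel k on I, a σ-finite measure μ on 𝓘, every m ≥ 1 and all s, t ∈ I with s ≤ t, the resolvent R_{k,μ} := Σ_{n=1}^∞ R_{k,μ,n} satisfies R_{k,μ}(t,s) = R_{k,μ,1}(t,s) + ⋯ + R_{k,μ,m}(t,s) + ∫_{[s,t]} R_{k,μ,m}(t,s̃) R_{k,μ}(s̃,s) μ(ds̃). In particular (m = 1), R_{k,μ}(t,s) = k(t,s) + ∫_{[s,t]} k(t,s̃) R_{k,μ}(s̃,s) μ(ds̃), i.e. for each s ∈ I the function R_{k,μ}(·,s) solves the generalised linear Volterra integral equation with kernel k. -/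
open MeasureTheory ENNReal

namespace ResolventAux

variable {I : Type*} [MeasurableSpace I] [Preorder I] {μ : Measure I} {K : I → I → ℝ≥0∞}

lemma measurableSet_interval (hΔ : MeasurableSet {q : I × I | q.2 ≤ q.1}) (s t : I) :
    MeasurableSet {u : I | s ≤ u ∧ u ≤ t} := by
  have h1 : MeasurableSet {u : I | s ≤ u} :=
    (measurable_id.prodMk measurable_const) hΔ
  have h2 : MeasurableSet {u : I | u ≤ t} :=
    (measurable_const.prodMk measurable_id) hΔ
  exact h1.inter h2

lemma measurable_res [SigmaFinite μ] (hΔ : MeasurableSet {q : I × I | q.2 ≤ q.1})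
    (hK : Measurable (Function.uncurry K)) (n : ℕ) :
    Measurable (fun q : I × I => res (· ≤ ·) μ K n q.1 q.2) := by
  induction n with
  | zero => exact hK
  | succ n ih =>
    have heq : (fun q : I × I => res (· ≤ ·) μ K (n + 1) q.1 q.2)
        = fun q : I × I => ∫⁻ u, ({p : (I × I) × I | p.1.2 ≤ p.2 ∧ p.2 ≤ p.1.1}.indicator
            (fun p => K p.1.1 p.2 * res (· ≤ ·) μ K n p.2 p.1.2)) (q, u) ∂μ := by
      funext q
      show (∫⁻ u in {u : I | q.2 ≤ u ∧ u ≤ q.1}, K q.1 u * res (· ≤ ·) μ K n u q.2 ∂μ) = _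
      rw [← lintegral_indicator (measurableSet_interval hΔ q.2 q.1)]
      refine lintegral_congr fun u => ?_
      by_cases h : u ∈ {u : I | q.2 ≤ u ∧ u ≤ q.1}
      · rw [Set.indicator_of_mem h, Set.indicator_of_mem
          (show (q, u) ∈ {p : (I × I) × I | p.1.2 ≤ p.2 ∧ p.2 ≤ p.1.1} from h)]
      · rw [Set.indicator_of_notMem h, Set.indicator_of_notMem
          (show (q, u) ∉ {p : (I × I) × I | p.1.2 ≤ p.2 ∧ p.2 ≤ p.1.1} from h)]
    rw [heq]
    apply Measurable.lintegral_prod_right'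
    apply Measurable.indicator
    · exact (hK.comp (measurable_fst.fst.prodMk measurable_snd)).mul
        (ih.comp (measurable_snd.prodMk measurable_fst.snd))
    · have h1 : MeasurableSet {p : (I × I) × I | p.1.2 ≤ p.2} :=
        (measurable_snd.prodMk measurable_fst.snd) hΔ
      have h2 : MeasurableSet {p : (I × I) × I | p.2 ≤ p.1.1} :=
        (measurable_fst.fst.prodMk measurable_snd) hΔ
      exact h1.inter h2

lemma measurable_res_left [SigmaFinite μ] (hΔ : MeasurableSet {q : I × I | q.2 ≤ q.1})
    (hK : Measurable (Function.uncurry K)) (n : ℕ) (s : I) :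
    Measurable (fun u : I => res (· ≤ ·) μ K n u s) :=
  (measurable_res hΔ hK n).comp (measurable_id.prodMk measurable_const)

lemma measurable_res_right [SigmaFinite μ] (hΔ : MeasurableSet {q : I × I | q.2 ≤ q.1})
    (hK : Measurable (Function.uncurry K)) (n : ℕ) (t : I) :
    Measurable (fun u : I => res (· ≤ ·) μ K n t u) :=
  (measurable_res hΔ hK n).comp (measurable_const.prodMk measurable_id)

/-- Composition identity: `R_{m+n+1}(t,s) = ∫_{[s,t]} R_m(t,u) R_n(u,s) μ(du)`. -/
lemma res_comp [SigmaFinite μ] (hΔ : MeasurableSet {q : I × I | q.2 ≤ q.1})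
    (hK : Measurable (Function.uncurry K)) (m : ℕ) :
    ∀ n : ℕ, ∀ s t : I, s ≤ t →
      res (· ≤ ·) μ K (m + n + 1) t s
        = ∫⁻ u in {u : I | s ≤ u ∧ u ≤ t},
            res (· ≤ ·) μ K m t u * res (· ≤ ·) μ K n u s ∂μ := by
  induction m with
  | zero =>
    intro n s t _
    rw [Nat.zero_add]
    rfl
  | succ m ih =>
    intro n s t hst
    have hidx : m + 1 + n + 1 = (m + n + 1) + 1 := by omega
    rw [hidx]
    show (∫⁻ v in {v : I | s ≤ v ∧ v ≤ t}, K t v * res (· ≤ ·) μ K (m + n + 1) v s ∂μ) = _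
    have step1 : (∫⁻ v in {v : I | s ≤ v ∧ v ≤ t}, K t v * res (· ≤ ·) μ K (m + n + 1) v s ∂μ)
        = ∫⁻ v in {v : I | s ≤ v ∧ v ≤ t},
            K t v * ∫⁻ u in {u : I | s ≤ u ∧ u ≤ v},
              res (· ≤ ·) μ K m v u * res (· ≤ ·) μ K n u s ∂μ ∂μ := by
      apply setLIntegral_congr_fun (measurableSet_interval hΔ s t)
      intro v hv
      dsimp only
      rw [ih n s v hv.1]
    rw [step1]
    have hF : Measurable (fun p : I × I =>
        ({p : I × I | s ≤ p.2 ∧ p.2 ≤ p.1 ∧ p.1 ≤ t}.indicator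
          (fun p => K t p.1 * res (· ≤ ·) μ K m p.1 p.2 * res (· ≤ ·) μ K n p.2 s)) p) := by
      apply Measurable.indicator
      · exact (((hK.comp (measurable_const.prodMk measurable_fst)).mul
          ((measurable_res hΔ hK m).comp (measurable_fst.prodMk measurable_snd))).mul
          ((measurable_res_left hΔ hK n s).comp measurable_snd))
      · have h1 : MeasurableSet {p : I × I | s ≤ p.2} :=
          (measurable_snd.prodMk measurable_const) hΔ
        have h2 : MeasurableSet {p : I × I | p.2 ≤ p.1} := hΔ
        have h3 : MeasurableSet {p : I × I | p.1 ≤ t} :=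
          (measurable_const.prodMk measurable_fst) hΔ
        exact h1.inter (h2.inter h3)
    have lhs_eq : (∫⁻ v in {v : I | s ≤ v ∧ v ≤ t},
          K t v * ∫⁻ u in {u : I | s ≤ u ∧ u ≤ v},
            res (· ≤ ·) μ K m v u * res (· ≤ ·) μ K n u s ∂μ ∂μ)
        = ∫⁻ v, ∫⁻ u,
            ({p : I × I | s ≤ p.2 ∧ p.2 ≤ p.1 ∧ p.1 ≤ t}.indicator
              (fun p => K t p.1 * res (· ≤ ·) μ K m p.1 p.2 * res (· ≤ ·) μ K n p.2 s)) (v, u)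
            ∂μ ∂μ := by
      rw [← lintegral_indicator (measurableSet_interval hΔ s t)]
      refine lintegral_congr fun v => ?_
      by_cases hv : v ∈ {v : I | s ≤ v ∧ v ≤ t}
      · have hmeas1 : Measurable (fun u : I => ({u' : I | s ≤ u' ∧ u' ≤ v}.indicator
            (fun u' => res (· ≤ ·) μ K m v u' * res (· ≤ ·) μ K n u' s)) u) :=
          Measurable.indicator
            ((measurable_res_right hΔ hK m v).mul (measurable_res_left hΔ hK n s))
            (measurableSet_interval hΔ s v)
        rw [Set.indicator_of_mem hv,
          ← lintegral_indicator (measurableSet_interval hΔ s v),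
          ← lintegral_const_mul (K t v) hmeas1]
        refine lintegral_congr fun u => ?_
        by_cases h1 : u ∈ {u' : I | s ≤ u' ∧ u' ≤ v}
        · rw [Set.indicator_of_mem h1, Set.indicator_of_mem
            (show (v, u) ∈ {p : I × I | s ≤ p.2 ∧ p.2 ≤ p.1 ∧ p.1 ≤ t} from
              ⟨h1.1, h1.2, hv.2⟩), mul_assoc]
        · rw [Set.indicator_of_notMem h1, mul_zero, Set.indicator_of_notMem
            (show (v, u) ∉ {p : I × I | s ≤ p.2 ∧ p.2 ≤ p.1 ∧ p.1 ≤ t} from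
              fun h => h1 ⟨h.1, h.2.1⟩)]
      · rw [Set.indicator_of_notMem hv]
        symm
        have hz : ∀ u : I,
            ({p : I × I | s ≤ p.2 ∧ p.2 ≤ p.1 ∧ p.1 ≤ t}.indicator
              (fun p => K t p.1 * res (· ≤ ·) μ K m p.1 p.2 * res (· ≤ ·) μ K n p.2 s))
              (v, u) = 0 := by
          intro u
          apply Set.indicator_of_notMem
          rintro ⟨h1, h2, h3⟩
          exact hv ⟨h1.trans h2, h3⟩
        simp only [hz, lintegral_zero]
    rw [lhs_eq, lintegral_lintegral_swap hF.aemeasurable,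
      ← lintegral_indicator (measurableSet_interval hΔ s t)]
    refine lintegral_congr fun u => ?_
    by_cases hu : u ∈ {u : I | s ≤ u ∧ u ≤ t}
    · rw [Set.indicator_of_mem hu]
      show _ = (∫⁻ v in {v : I | u ≤ v ∧ v ≤ t}, K t v * res (· ≤ ·) μ K m v u ∂μ)
          * res (· ≤ ·) μ K n u s
      have hKv : Measurable (fun v : I => K t v) :=
        hK.comp (measurable_const.prodMk measurable_id)
      have hRm : Measurable (fun v : I => res (· ≤ ·) μ K m v u) :=
        measurable_res_left hΔ hK m u
      have hmeas2 : Measurable (fun v : I => ({v' : I | u ≤ v' ∧ v' ≤ t}.indicator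
          (fun v' => K t v' * res (· ≤ ·) μ K m v' u)) v) :=
        Measurable.indicator (hKv.mul hRm) (measurableSet_interval hΔ u t)
      rw [← lintegral_indicator (measurableSet_interval hΔ u t),
        ← lintegral_mul_const (res (· ≤ ·) μ K n u s) hmeas2]
      refine lintegral_congr fun v => ?_
      by_cases h1 : v ∈ {v' : I | u ≤ v' ∧ v' ≤ t}
      · rw [Set.indicator_of_mem
          (show (v, u) ∈ {p : I × I | s ≤ p.2 ∧ p.2 ≤ p.1 ∧ p.1 ≤ t} from
            ⟨hu.1, h1.1, h1.2⟩), Set.indicator_of_mem h1]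
      · rw [Set.indicator_of_notMem
          (show (v, u) ∉ {p : I × I | s ≤ p.2 ∧ p.2 ≤ p.1 ∧ p.1 ≤ t} from
            fun h => h1 ⟨h.2.1, h.2.2⟩), Set.indicator_of_notMem h1, zero_mul]
    · rw [Set.indicator_of_notMem hu]
      have hz : ∀ v : I,
          ({p : I × I | s ≤ p.2 ∧ p.2 ≤ p.1 ∧ p.1 ≤ t}.indicator
            (fun p => K t p.1 * res (· ≤ ·) μ K m p.1 p.2 * res (· ≤ ·) μ K n p.2 s))
            (v, u) = 0 := by
        intro v
        apply Set.indicator_of_notMem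
        rintro ⟨h1, h2, h3⟩
        exact hu ⟨h1, h2.trans h3⟩
      simp only [hz, lintegral_zero]

end ResolventAux

set_option maxHeartbeats 1000000 in
/-- The resolvent `R_{k,μ} = ∑_{n=1}^∞ R_{k,μ,n}` satisfies, for every `m ≥ 1`
(here `m + 1`, i.e. `res … m = R_{·,m+1}`) and all `s ≤ t`,
`R_{k,μ}(t,s) = R_{k,μ,1}(t,s) + ⋯ + R_{k,μ,m}(t,s)
  + ∫_{[s,t]} R_{k,μ,m}(t,u) R_{k,μ}(u,s) μ(du)`;
in particular (`m = 1`), `R_{k,μ}(·,s)` solves the generalised linear Volterra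
integral equation `R_{k,μ}(t,s) = k(t,s) + ∫_{[s,t]} k(t,u) R_{k,μ}(u,s) μ(du)`. -/
theorem resolvent_volterra_equation {I : Type*} [MeasurableSpace I] [Preorder I]
    (hΔ : MeasurableSet {q : I × I | q.2 ≤ q.1})
    (μ : Measure I) [SigmaFinite μ]
    (k : I → I → ℝ≥0∞)
    (hk : Measurable fun q : {q : I × I // q.2 ≤ q.1} => k q.1.1 q.1.2) :
    (∀ m : ℕ, ∀ s t : I, s ≤ t →
      (∑' n : ℕ, res (· ≤ ·) μ k n t s)
        = ∑ i ∈ Finset.range (m + 1), res (· ≤ ·) μ k i t s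
          + ∫⁻ u in {u : I | s ≤ u ∧ u ≤ t},
              res (· ≤ ·) μ k m t u * (∑' n : ℕ, res (· ≤ ·) μ k n u s) ∂μ) ∧
    (∀ s t : I, s ≤ t →
      (∑' n : ℕ, res (· ≤ ·) μ k n t s)
        = k t s + ∫⁻ u in {u : I | s ≤ u ∧ u ≤ t},
            k t u * (∑' n : ℕ, res (· ≤ ·) μ k n u s) ∂μ) := by
  classical
  open ResolventAux in
  set K : I → I → ℝ≥0∞ := fun t s => if s ≤ t then k t s else 0 with hKdef
  have hK : Measurable (Function.uncurry K) := by
    have : Function.uncurry K = Function.extend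
        (Subtype.val : {q : I × I // q.2 ≤ q.1} → I × I)
        (fun q : {q : I × I // q.2 ≤ q.1} => k q.1.1 q.1.2) (fun _ => 0) := by
      funext q
      by_cases h : q.2 ≤ q.1
      · have := Function.Injective.extend_apply Subtype.val_injective
          (fun q : {q : I × I // q.2 ≤ q.1} => k q.1.1 q.1.2) (fun _ => 0)
          (⟨q, h⟩ : {q : I × I // q.2 ≤ q.1})
        simp only [Function.uncurry, hKdef, if_pos h]
        exact this.symm ▸ rfl
      · rw [Function.extend_apply']
        · simp [Function.uncurry, hKdef, h]
        · rintro ⟨⟨q', hq'⟩, rfl⟩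
          exact h hq'
    rw [this]
    exact (MeasurableEmbedding.subtype_coe hΔ).measurable_extend hk measurable_const
  have hres_eq : ∀ n : ℕ, ∀ t s : I, s ≤ t →
      res (· ≤ ·) μ k n t s = res (· ≤ ·) μ K n t s := by
    intro n
    induction n with
    | zero => intro t s hst; show k t s = K t s; rw [hKdef]; simp [if_pos hst]
    | succ n ih =>
      intro t s hst
      show (∫⁻ u in {u : I | s ≤ u ∧ u ≤ t}, k t u * res (· ≤ ·) μ k n u s ∂μ) = _
      apply setLIntegral_congr_fun (measurableSet_interval hΔ s t)
      intro u hu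
      dsimp only
      rw [ih u s hu.1, hKdef]
      simp [if_pos hu.2]
  have htsum_eq : ∀ t s : I, s ≤ t →
      (∑' n : ℕ, res (· ≤ ·) μ k n t s) = ∑' n : ℕ, res (· ≤ ·) μ K n t s := by
    intro t s hst
    exact tsum_congr fun n => hres_eq n t s hst
  have main : ∀ m : ℕ, ∀ s t : I, s ≤ t →
      (∑' n : ℕ, res (· ≤ ·) μ k n t s)
        = ∑ i ∈ Finset.range (m + 1), res (· ≤ ·) μ k i t s
          + ∫⁻ u in {u : I | s ≤ u ∧ u ≤ t},
              res (· ≤ ·) μ k m t u * (∑' n : ℕ, res (· ≤ ·) μ k n u s) ∂μ := by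
    intro m s t hst
    rw [htsum_eq t s hst]
    have hsplit : (∑' n : ℕ, res (· ≤ ·) μ K n t s)
        = ∑ i ∈ Finset.range (m + 1), res (· ≤ ·) μ K i t s
          + ∑' i : ℕ, res (· ≤ ·) μ K (i + (m + 1)) t s :=
      (Summable.sum_add_tsum_nat_add' (f := fun n => res (· ≤ ·) μ K n t s) (k := m + 1) ENNReal.summable).symm
    rw [hsplit]
    congr 1
    · exact Finset.sum_congr rfl fun i _ => (hres_eq i t s hst).symm
    have hcomp : ∀ i : ℕ, res (· ≤ ·) μ K (i + (m + 1)) t s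
        = ∫⁻ u in {u : I | s ≤ u ∧ u ≤ t},
            res (· ≤ ·) μ K m t u * res (· ≤ ·) μ K i u s ∂μ := by
      intro i
      have h : i + (m + 1) = m + i + 1 := by omega
      rw [h]
      exact res_comp hΔ hK m i s t hst
    calc (∑' i : ℕ, res (· ≤ ·) μ K (i + (m + 1)) t s)
        = ∑' i : ℕ, ∫⁻ u in {u : I | s ≤ u ∧ u ≤ t},
            res (· ≤ ·) μ K m t u * res (· ≤ ·) μ K i u s ∂μ := tsum_congr hcomp
      _ = ∫⁻ u in {u : I | s ≤ u ∧ u ≤ t},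
            ∑' i : ℕ, res (· ≤ ·) μ K m t u * res (· ≤ ·) μ K i u s ∂μ := by
          rw [lintegral_tsum (f := fun i u => res (· ≤ ·) μ K m t u * res (· ≤ ·) μ K i u s) fun i =>
            ((measurable_res_right hΔ hK m t).mul (measurable_res_left hΔ hK i s)).aemeasurable]
      _ = ∫⁻ u in {u : I | s ≤ u ∧ u ≤ t},
            res (· ≤ ·) μ K m t u * ∑' i : ℕ, res (· ≤ ·) μ K i u s ∂μ := by
          refine lintegral_congr fun u => ?_
          exact ENNReal.tsum_mul_left
      _ = ∫⁻ u in {u : I | s ≤ u ∧ u ≤ t},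
            res (· ≤ ·) μ k m t u * ∑' i : ℕ, res (· ≤ ·) μ k i u s ∂μ := by
          apply setLIntegral_congr_fun (measurableSet_interval hΔ s t)
          intro u hu
          dsimp only
          rw [hres_eq m t u hu.2, htsum_eq u s hu.1]
  refine ⟨main, fun s t hst => ?_⟩
  have h0 := main 0 s t hst
  simpa [res] using h0
end

section
/- Let I be a non-degenerate interval in ℝ with its Borel σ-field, ordered by the usual order, p ≥ 1, and μ a σ-finite Borel measure on I with μ({t}) = 0 for all t ∈ I. Let k be a non-negative kernel on I satisfying the monotonicity condition k(s̃,s) ≤ k(t,s) for all s ≤ s̃ ≤ t in I, and suppose ∫_{[s,t]} k(t,s̃)^p μ(ds̃) < ∞ for all s ≤ t in I. Then for every n ≥ 1 and all s ≤ t in I: R_{k^p,μ,n}(t,s) ≤ (k(t,s)^p / (n−1)!) · (∫_{[s,t]} k(t,s̃)^p μ(ds̃))^{n−1}. -/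
open MeasureTheory ENNReal

section Aux

open Set Filter Topology

/-- Binomial-type inequality in `ℕ`. -/
private lemma aux_nat_pow (a k : ℕ) : a ^ (k + 1) + (k + 1) * a ^ k ≤ (a + 1) ^ (k + 1) := by
  induction k with
  | zero => simp [pow_succ]
  | succ k ih =>
    calc a ^ (k + 2) + (k + 2) * a ^ (k + 1)
        ≤ a ^ (k + 2) + (k + 2) * a ^ (k + 1) + (k + 1) * a ^ k := Nat.le_add_right _ _
      _ = (a + 1) * (a ^ (k + 1) + (k + 1) * a ^ k) := by ring
      _ ≤ (a + 1) * (a + 1) ^ (k + 1) := Nat.mul_le_mul_left _ ih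
      _ = (a + 1) ^ (k + 2) := by ring

private lemma aux_nat_sum (n : ℕ) : ∀ m : ℕ,
    (n + 1) * (∑ j ∈ Finset.range m, (j + 1) ^ n) ≤ (m + 1) ^ (n + 1) := by
  intro m
  induction m with
  | zero => simp
  | succ m ih =>
    rw [Finset.sum_range_succ, Nat.mul_add]
    have h := aux_nat_pow (m + 1) n
    calc (n + 1) * (∑ j ∈ Finset.range m, (j + 1) ^ n) + (n + 1) * (m + 1) ^ n
        ≤ (m + 1) ^ (n + 1) + (n + 1) * (m + 1) ^ n := by
          exact Nat.add_le_add_right ih _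
      _ ≤ (m + 1 + 1) ^ (n + 1) := h
      _ = (m + 1 + 1) ^ (n + 1) := rfl

variable {S : Set ℝ}

private lemma measurableSet_Icc' (a b : S) : MeasurableSet (Set.Icc a b) := by
  have : Set.Icc a b = Subtype.val ⁻¹' Set.Icc (a : ℝ) (b : ℝ) := by
    ext x
    simp only [Set.mem_Icc, Set.mem_preimage, Subtype.coe_le_coe]
  rw [this]
  exact measurable_subtype_coe measurableSet_Icc

/-- Any upward closed subset of a subset of `ℝ` is measurable. -/
private lemma upperClosed_measurableSet (U : Set S)
    (hU : ∀ x y : S, x ∈ U → x ≤ y → y ∈ U) : MeasurableSet U := by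
  rcases U.eq_empty_or_nonempty with h | ⟨u0, hu0⟩
  · simp [h]
  by_cases hbdd : BddBelow (Subtype.val '' U)
  · set c := sInf (Subtype.val '' U) with hc
    have himg : (Subtype.val '' U).Nonempty := ⟨u0, u0, hu0, rfl⟩
    have h1 : Subtype.val ⁻¹' Set.Ioi c ⊆ U := by
      intro x hx
      obtain ⟨a, ⟨u, huU, rfl⟩, hlt⟩ := exists_lt_of_csInf_lt himg hx
      exact hU u x huU hlt.le
    have h2 : ∀ x ∈ U, c ≤ (x : ℝ) := fun x hx => csInf_le hbdd ⟨x, hx, rfl⟩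
    have hUeq : U = Subtype.val ⁻¹' Set.Ioi c ∪ (U ∩ {x : S | (x : ℝ) = c}) := by
      apply Set.Subset.antisymm
      · intro x hx
        rcases lt_or_eq_of_le (h2 x hx) with h | h
        · exact Or.inl h
        · exact Or.inr ⟨hx, h.symm⟩
      · rintro x (hx | hx)
        · exact h1 hx
        · exact hx.1
    rw [hUeq]
    refine (measurable_subtype_coe measurableSet_Ioi).union ?_
    refine Set.Subsingleton.measurableSet fun x hx y hy => ?_
    exact Subtype.ext (hx.2.trans hy.2.symm)
  · have : U = Set.univ := by
      apply Set.eq_univ_of_forall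
      intro y
      obtain ⟨a, ha, hlt⟩ := not_bddBelow_iff.1 hbdd (y : ℝ)
      obtain ⟨u, huU, rfl⟩ := ha
      exact hU u y huU hlt.le
    rw [this]
    exact MeasurableSet.univ

private lemma monotone_measurable {F : S → ℝ≥0∞} (hF : Monotone F) : Measurable F := by
  apply measurable_of_Iic
  intro x
  have h : MeasurableSet ((F ⁻¹' Set.Iic x)ᶜ) := by
    apply upperClosed_measurableSet
    intro a b ha hab hb
    exact ha (le_trans (hF hab) hb)
  simpa using h.compl

private lemma fiber_null (ν : Measure S) (hatom : ∀ x : S, ν {x} = 0) (c : ℝ) :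
    ν {v : S | (v : ℝ) = c} = 0 := by
  rcases Set.eq_empty_or_nonempty {v : S | (v : ℝ) = c} with h | ⟨z, hz⟩
  · simp [h]
  · refine measure_mono_null (fun y hy => ?_) (hatom z)
    exact Set.mem_singleton_iff.2 (Subtype.ext (hy.trans hz.symm))

/-- Upper bound for the distribution function. -/
private lemma meas_upper (ν : Measure S) (hatom : ∀ x : S, ν {x} = 0) (s t : S) (x : ℝ≥0∞) :
    ν {u : S | u ∈ Set.Icc s t ∧ ν (Set.Icc s u) ≤ x} ≤ x := by
  set D := {u : S | u ∈ Set.Icc s t ∧ ν (Set.Icc s u) ≤ x} with hD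
  rcases D.eq_empty_or_nonempty with h | hne
  · simp [h]
  have hbdd : BddAbove (Subtype.val '' D) := by
    refine ⟨(t : ℝ), ?_⟩
    rintro _ ⟨u, hu, rfl⟩
    exact hu.1.2
  obtain ⟨w, hwmono, hwtend, hwmem⟩ := exists_seq_tendsto_sSup (hne.image _) hbdd
  set c := sSup (Subtype.val '' D) with hc
  choose d hdD hdval using hwmem
  have hdmono : Monotone d := by
    intro i j hij
    have h := hwmono hij
    rw [← hdval i, ← hdval j] at h
    exact h
  have hcover : D ⊆ (⋃ kk, Set.Icc s (d kk)) ∪ {v : S | (v : ℝ) = c} := by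
    intro v hv
    have hvc : (v : ℝ) ≤ c := le_csSup hbdd ⟨v, hv, rfl⟩
    rcases lt_or_eq_of_le hvc with hlt | heq
    · obtain ⟨kk, hk⟩ := ((tendsto_order.1 hwtend).1 _ hlt).exists
      refine Or.inl (Set.mem_iUnion.2 ⟨kk, hv.1.1, ?_⟩)
      rw [← Subtype.coe_le_coe, hdval]
      exact hk.le
    · exact Or.inr heq
  calc ν D ≤ ν ((⋃ kk, Set.Icc s (d kk)) ∪ {v : S | (v : ℝ) = c}) := measure_mono hcover
    _ ≤ ν (⋃ kk, Set.Icc s (d kk)) + ν {v : S | (v : ℝ) = c} := measure_union_le _ _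
    _ = ν (⋃ kk, Set.Icc s (d kk)) := by rw [fiber_null ν hatom c, add_zero]
    _ = ⨆ kk, ν (Set.Icc s (d kk)) :=
        Monotone.measure_iUnion (fun i j hij => Set.Icc_subset_Icc le_rfl (hdmono hij))
    _ ≤ x := iSup_le fun kk => (hdD kk).2

/-- Lower bound for the distribution function. -/
private lemma meas_lower (ν : Measure S) (hatom : ∀ x : S, ν {x} = 0) (s t : S)
    (hfin : ν (Set.Icc s t) ≠ ∞) {x : ℝ≥0∞} (hx : x ≤ ν (Set.Icc s t)) :
    x ≤ ν {u : S | u ∈ Set.Icc s t ∧ ν (Set.Icc s u) ≤ x} := by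
  set D := {u : S | u ∈ Set.Icc s t ∧ ν (Set.Icc s u) ≤ x} with hD
  set R := Set.Icc s t \ D with hR
  rcases R.eq_empty_or_nonempty with h | hne
  · have hsub : Set.Icc s t ⊆ D := by
      intro u hu
      by_contra hu'
      exact Set.eq_empty_iff_forall_notMem.1 h u ⟨hu, hu'⟩
    exact hx.trans (measure_mono hsub)
  have hbdd : BddBelow (Subtype.val '' R) := by
    refine ⟨(s : ℝ), ?_⟩
    rintro _ ⟨u, hu, rfl⟩
    exact hu.1.1
  obtain ⟨w, hwanti, hwtend, hwmem⟩ := exists_seq_tendsto_sInf (hne.image _) hbdd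
  set c := sInf (Subtype.val '' R) with hc
  choose d hdR hdval using hwmem
  have hdanti : Antitone d := by
    intro i j hij
    have h := hwanti hij
    rw [← hdval i, ← hdval j] at h
    exact h
  have hfin0 : ν (Set.Icc s (d 0)) ≠ ∞ :=
    ne_top_of_le_ne_top hfin (measure_mono (Set.Icc_subset_Icc le_rfl (hdR 0).1.2))
  have hK : ν (⋂ kk, Set.Icc s (d kk)) = ⨅ kk, ν (Set.Icc s (d kk)) :=
    Antitone.measure_iInter (fun i j hij => Set.Icc_subset_Icc le_rfl (hdanti hij))
      (fun kk => (measurableSet_Icc' s (d kk)).nullMeasurableSet) ⟨0, hfin0⟩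
  have hxK : x ≤ ν (⋂ kk, Set.Icc s (d kk)) := by
    rw [hK]
    refine le_iInf fun kk => ?_
    have h1 : d kk ∈ Set.Icc s t := (hdR kk).1
    have h2 : ¬(ν (Set.Icc s (d kk)) ≤ x) := fun hcon => (hdR kk).2 ⟨h1, hcon⟩
    exact (not_le.1 h2).le
  have hcover : (⋂ kk, Set.Icc s (d kk)) ⊆ D ∪ {v : S | (v : ℝ) = c} := by
    intro v hv
    have h1 : ∀ kk, v ≤ d kk := fun kk => (Set.mem_iInter.1 hv kk).2
    have hvc : (v : ℝ) ≤ c := by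
      refine ge_of_tendsto hwtend (Filter.Eventually.of_forall fun kk => ?_)
      rw [← hdval kk]
      exact h1 kk
    rcases eq_or_lt_of_le hvc with heq | hlt
    · exact Or.inr heq
    · have hvA : v ∈ Set.Icc s t := ⟨(Set.mem_iInter.1 hv 0).1, (h1 0).trans (hdR 0).1.2⟩
      left
      by_contra hvD
      exact absurd (csInf_le hbdd ⟨v, ⟨hvA, hvD⟩, rfl⟩) (not_le.2 hlt)
  calc x ≤ ν (⋂ kk, Set.Icc s (d kk)) := hxK
    _ ≤ ν (D ∪ {v : S | (v : ℝ) = c}) := measure_mono hcover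
    _ ≤ ν D + ν {v : S | (v : ℝ) = c} := measure_union_le _ _
    _ = ν D := by rw [fiber_null ν hatom c, add_zero]

/-- The key simplex-type estimate for an atomless measure. -/
private lemma key_estimate (ν : Measure S) (hatom : ∀ x : S, ν {x} = 0) (s t : S)
    (hfin : ν (Set.Icc s t) ≠ ∞) (n : ℕ) :
    ((n : ℝ≥0∞) + 1) * ∫⁻ u in Set.Icc s t, (ν (Set.Icc s u)) ^ n ∂ν
      ≤ (ν (Set.Icc s t)) ^ (n + 1) := by
  classical
  have hFmono : Monotone (fun u : S => ν (Set.Icc s u)) :=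
    fun u v huv => measure_mono (Set.Icc_subset_Icc le_rfl huv)
  have hFmeas : Measurable (fun u : S => ν (Set.Icc s u)) := monotone_measurable hFmono
  set F : S → ℝ≥0∞ := fun u => ν (Set.Icc s u) with hF
  set A := Set.Icc s t with hA
  set B := ν A with hB
  have hmain : ∀ m : ℕ, 1 ≤ m →
      ((n : ℝ≥0∞) + 1) * ∫⁻ u in A, F u ^ n ∂ν ≤ (B + B / (m : ℝ≥0∞)) ^ (n + 1) := by
    intro m hm
    set b := B / (m : ℝ≥0∞) with hb
    have hm0 : (m : ℝ≥0∞) ≠ 0 := Nat.cast_ne_zero.2 (by omega)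
    have hbne : b ≠ ∞ := by
      rw [hb]
      intro h
      rw [ENNReal.div_eq_top] at h
      rcases h with ⟨_, h⟩ | ⟨h, _⟩
      · exact hm0 h
      · exact hfin h
    have hmb : (m : ℝ≥0∞) * b = B := ENNReal.mul_div_cancel hm0 (ENNReal.natCast_ne_top m)
    set E : ℕ → Set S := fun j => A ∩ F ⁻¹' Set.Iic ((j : ℝ≥0∞) * b) with hE
    have hEmeas : ∀ j, MeasurableSet (E j) :=
      fun j => (measurableSet_Icc' s t).inter (hFmeas measurableSet_Iic)
    have hEeq : ∀ j, E j = {u : S | u ∈ Set.Icc s t ∧ ν (Set.Icc s u) ≤ (j : ℝ≥0∞) * b} := by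
      intro j; rfl
    have hEupper : ∀ j, ν (E j) ≤ (j : ℝ≥0∞) * b := by
      intro j
      rw [hEeq j]
      exact meas_upper ν hatom s t _
    have hElower : ∀ j, j ≤ m → (j : ℝ≥0∞) * b ≤ ν (E j) := by
      intro j hj
      rw [hEeq j]
      refine meas_lower ν hatom s t hfin ?_
      calc (j : ℝ≥0∞) * b ≤ (m : ℝ≥0∞) * b :=
            mul_le_mul_left (by exact_mod_cast hj) b
        _ = B := hmb
    have hAE : ∀ j, m ≤ j → E j = A := by
      intro j hj
      refine Set.Subset.antisymm Set.inter_subset_left fun u hu => ⟨hu, ?_⟩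
      show F u ≤ (j : ℝ≥0∞) * b
      calc F u ≤ B := measure_mono (Set.Icc_subset_Icc le_rfl hu.2)
        _ = (m : ℝ≥0∞) * b := hmb.symm
        _ ≤ (j : ℝ≥0∞) * b := mul_le_mul_left (by exact_mod_cast hj) b
    set G : ℕ → Set S := fun j => E (j + 1) \ E j with hG
    have hEmono : ∀ j, E j ⊆ E (j + 1) := by
      intro j
      refine Set.inter_subset_inter_right _ (Set.preimage_mono (Set.Iic_subset_Iic.2 ?_))
      exact mul_le_mul_left (by exact_mod_cast Nat.le_succ j) b
    have hGempty : ∀ j, m ≤ j → G j = ∅ := by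
      intro j hj
      rw [hG]
      simp only [hAE j hj, hAE (j + 1) (hj.trans (Nat.le_succ j)), Set.diff_self]
    have hGsub : ∀ j, j < m → ν (G j) ≤ b := by
      intro j hj
      have hEfin : ν (E j) ≠ ∞ :=
        ne_top_of_le_ne_top hfin (measure_mono Set.inter_subset_left)
      have hjb : (j : ℝ≥0∞) * b ≠ ∞ :=
        ENNReal.mul_ne_top (ENNReal.natCast_ne_top j) hbne
      rw [hG]
      rw [measure_diff (hEmono j) (hEmeas j).nullMeasurableSet hEfin]
      calc ν (E (j + 1)) - ν (E j) ≤ ((j + 1 : ℕ) : ℝ≥0∞) * b - (j : ℝ≥0∞) * b :=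
            tsub_le_tsub (hEupper (j + 1)) (hElower j hj.le)
        _ = b := by
            rw [show ((j + 1 : ℕ) : ℝ≥0∞) * b = (j : ℝ≥0∞) * b + b by push_cast; ring]
            exact ENNReal.add_sub_cancel_left hjb
    have hsub : A ⊆ E 0 ∪ ⋃ j, G j := by
      intro u hu
      have hex : ∃ j, u ∈ E j := ⟨m, (hAE m le_rfl).symm ▸ hu⟩
      rcases Nat.eq_zero_or_pos (Nat.find hex) with h0 | hpos
      · exact Or.inl (h0 ▸ Nat.find_spec hex)
      · right
        obtain ⟨j, hj⟩ : ∃ j, Nat.find hex = j + 1 := ⟨Nat.find hex - 1, by omega⟩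
        refine Set.mem_iUnion.2 ⟨j, hj ▸ Nat.find_spec hex, fun hmem => ?_⟩
        exact Nat.find_min hex (by omega) hmem
    have hE0 : ν (E 0) = 0 := by
      have := hEupper 0
      simpa using this
    have hstep1 : ∫⁻ u in A, F u ^ n ∂ν ≤ ∑' j, ∫⁻ u in G j, F u ^ n ∂ν := by
      calc ∫⁻ u in A, F u ^ n ∂ν
          ≤ ∫⁻ u in E 0 ∪ ⋃ j, G j, F u ^ n ∂ν := lintegral_mono_set hsub
        _ ≤ ∫⁻ u in E 0, F u ^ n ∂ν + ∫⁻ u in ⋃ j, G j, F u ^ n ∂ν :=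
            lintegral_union_le _ _ _
        _ = ∫⁻ u in ⋃ j, G j, F u ^ n ∂ν := by
            rw [setLIntegral_measure_zero _ _ hE0, zero_add]
        _ ≤ ∑' j, ∫⁻ u in G j, F u ^ n ∂ν := lintegral_iUnion_le _ _
    have hterm : ∀ j, j < m → ∫⁻ u in G j, F u ^ n ∂ν ≤ ((j : ℝ≥0∞) + 1) ^ n * b ^ (n + 1) := by
      intro j hj
      calc ∫⁻ u in G j, F u ^ n ∂ν
          ≤ ∫⁻ _ in G j, (((j + 1 : ℕ) : ℝ≥0∞) * b) ^ n ∂ν := by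
            refine setLIntegral_mono' ((hEmeas (j + 1)).diff (hEmeas j)) fun u hu => ?_
            exact pow_le_pow_left' hu.1.2 n
        _ = (((j + 1 : ℕ) : ℝ≥0∞) * b) ^ n * ν (G j) := setLIntegral_const _ _
        _ ≤ (((j + 1 : ℕ) : ℝ≥0∞) * b) ^ n * b := mul_le_mul_right (hGsub j hj) _
        _ = ((j : ℝ≥0∞) + 1) ^ n * b ^ (n + 1) := by
            rw [mul_pow, pow_succ, Nat.cast_add, Nat.cast_one]
            ring
    have htsum : ∑' j, ∫⁻ u in G j, F u ^ n ∂ν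
        = ∑ j ∈ Finset.range m, ∫⁻ u in G j, F u ^ n ∂ν := by
      refine tsum_eq_sum fun j hj => ?_
      have : G j = ∅ := hGempty j (by simpa using hj)
      simp [this]
    have hsum : ∫⁻ u in A, F u ^ n ∂ν
        ≤ ∑ j ∈ Finset.range m, ((j : ℝ≥0∞) + 1) ^ n * b ^ (n + 1) := by
      refine (hstep1.trans_eq htsum).trans (Finset.sum_le_sum fun j hj => ?_)
      exact hterm j (Finset.mem_range.1 hj)
    have hfinal : ((n : ℝ≥0∞) + 1) * ∑ j ∈ Finset.range m, ((j : ℝ≥0∞) + 1) ^ n * b ^ (n + 1)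
        ≤ (B + b) ^ (n + 1) := by
      have hcast : ((n : ℝ≥0∞) + 1) * ∑ j ∈ Finset.range m, ((j : ℝ≥0∞) + 1) ^ n
          ≤ ((m : ℝ≥0∞) + 1) ^ (n + 1) := by
        have := aux_nat_sum n m
        have hc : (((n + 1) * ∑ j ∈ Finset.range m, (j + 1) ^ n : ℕ) : ℝ≥0∞)
            ≤ (((m + 1) ^ (n + 1) : ℕ) : ℝ≥0∞) := by exact_mod_cast this
        push_cast at hc
        exact hc
      calc ((n : ℝ≥0∞) + 1) * ∑ j ∈ Finset.range m, ((j : ℝ≥0∞) + 1) ^ n * b ^ (n + 1)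
          = (((n : ℝ≥0∞) + 1) * ∑ j ∈ Finset.range m, ((j : ℝ≥0∞) + 1) ^ n) * b ^ (n + 1) := by
            rw [← Finset.sum_mul]; ring
        _ ≤ ((m : ℝ≥0∞) + 1) ^ (n + 1) * b ^ (n + 1) := mul_le_mul_left hcast _
        _ = (((m : ℝ≥0∞) + 1) * b) ^ (n + 1) := by rw [mul_pow]
        _ = (B + b) ^ (n + 1) := by rw [add_mul, one_mul, hmb]
    calc ((n : ℝ≥0∞) + 1) * ∫⁻ u in A, F u ^ n ∂ν
        ≤ ((n : ℝ≥0∞) + 1) * ∑ j ∈ Finset.range m, ((j : ℝ≥0∞) + 1) ^ n * b ^ (n + 1) :=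
          mul_le_mul_right hsum _
      _ ≤ (B + b) ^ (n + 1) := hfinal
  have htend : Tendsto (fun m : ℕ => (B + B / (m : ℝ≥0∞)) ^ (n + 1)) atTop (𝓝 (B ^ (n + 1))) := by
    have h0 : Tendsto (fun m : ℕ => B / (m : ℝ≥0∞)) atTop (𝓝 0) := by
      have := ENNReal.Tendsto.const_mul (a := B) ENNReal.tendsto_inv_nat_nhds_zero
        (Or.inr hfin)
      simpa [div_eq_mul_inv] using this
    have h1 : Tendsto (fun m : ℕ => B + B / (m : ℝ≥0∞)) atTop (𝓝 B) := by
      have h2 : Tendsto (fun m : ℕ => B + B / (m : ℝ≥0∞)) atTop (𝓝 (B + 0)) :=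
        Tendsto.add (tendsto_const_nhds (x := B)) h0
      simpa using h2
    exact ENNReal.Tendsto.pow h1
  refine ge_of_tendsto htend ?_
  filter_upwards [Filter.eventually_ge_atTop 1] with m hm using hmain m hm

end Aux

/-- **Regular kernels on intervals** (Example 4 of the paper, estimate (12)): if `I` is a
non-degenerate interval of `ℝ`, `μ` a σ-finite atomless Borel measure on it, and `k` a
non-negative kernel satisfying the monotonicity condition and
`∫_{[s,t]} k(t,u)^p μ(du) < ∞` for `s ≤ t`, then
`R_{k^p,μ,n}(t,s) ≤ k(t,s)^p / (n-1)! * (∫_{[s,t]} k(t,u)^p μ(du))^{n-1}` for `n ≥ 1`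
(the index is shifted by one: `res … n = R_{·,n+1}`). -/
theorem regular_kernel_resolvent_bound
    (S : Set ℝ) (hconn : S.OrdConnected) (hnd : ∃ a ∈ S, ∃ b ∈ S, a ≠ b)
    (μ : Measure S) [SigmaFinite μ] (hatom : ∀ x : S, μ {x} = 0)
    (p : ℝ) (hp : 1 ≤ p)
    (k : S → S → ℝ≥0∞)
    (hk : Measurable fun q : {q : S × S // q.2 ≤ q.1} => k q.1.1 q.1.2)
    (hmono : ∀ s s' t : S, s ≤ s' → s' ≤ t → k s' s ≤ k t s)
    (hfin : ∀ s t : S, s ≤ t → (∫⁻ u in {u : S | s ≤ u ∧ u ≤ t}, k t u ^ p ∂μ) < ∞) :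
    ∀ n : ℕ, ∀ s t : S, s ≤ t →
      res (· ≤ ·) μ (fun a b => k a b ^ p) n t s
        ≤ k t s ^ p / (Nat.factorial n : ℝ≥0∞)
            * (∫⁻ u in {u : S | s ≤ u ∧ u ≤ t}, k t u ^ p ∂μ) ^ n := by
  have hp0 : (0 : ℝ) ≤ p := le_trans zero_le_one hp
  intro n
  induction n with
  | zero =>
    intro s t hst
    simp [res, Nat.factorial]
  | succ n ih =>
    intro s t hst
    classical
    -- the density
    set g : S → ℝ≥0∞ := fun u => if hu : u ∈ {v : S | v ≤ t} then k t u ^ p else 0 with hg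
    have hgmeas : Measurable g := by
      have hset : MeasurableSet {v : S | v ≤ t} := by
        have : {v : S | v ≤ t} = Subtype.val ⁻¹' Set.Iic (t : ℝ) := by
          ext x; simp [Subtype.coe_le_coe]
        rw [this]; exact measurable_subtype_coe measurableSet_Iic
      have he : Measurable fun u : {v : S | v ≤ t} =>
          (⟨(t, (u : S)), u.2⟩ : {q : S × S // q.2 ≤ q.1}) :=
        Measurable.subtype_mk (measurable_const.prodMk measurable_subtype_coe)
      have hf : Measurable fun u : {v : S | v ≤ t} => k t (u : S) ^ p :=
        (ENNReal.continuous_rpow_const (y := p)).measurable.comp (hk.comp he)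
      exact Measurable.dite (f := fun u : {v : S | v ≤ t} => k t (u : S) ^ p)
        (g := fun _ => (0 : ℝ≥0∞)) hf measurable_const hset
    have hgval : ∀ u : S, u ≤ t → g u = k t u ^ p := by
      intro u hu
      rw [hg]
      exact dif_pos hu
    set ν : Measure S := μ.withDensity g with hν
    have hνatom : ∀ x : S, ν {x} = 0 := by
      intro x
      rw [hν, withDensity_apply _ (measurableSet_singleton x), lintegral_singleton,
        hatom x, mul_zero]
    have hνIcc : ∀ u : S, u ≤ t → ν (Set.Icc s u) = ∫⁻ v in Set.Icc s u, k t v ^ p ∂μ := by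
      intro u hu
      rw [hν, withDensity_apply _ (measurableSet_Icc' s u)]
      refine setLIntegral_congr_fun (measurableSet_Icc' s u)
        (fun v hv => ?_)
      exact hgval v (hv.2.trans hu)
    have hIccSet : Set.Icc s t = {u : S | s ≤ u ∧ u ≤ t} := rfl
    have hB : ν (Set.Icc s t) = ∫⁻ u in {u : S | s ≤ u ∧ u ≤ t}, k t u ^ p ∂μ := by
      rw [hνIcc t le_rfl, hIccSet]
    have hBfin : ν (Set.Icc s t) ≠ ∞ := by
      rw [hB]
      exact (hfin s t hst).ne
    set F : S → ℝ≥0∞ := fun u => ν (Set.Icc s u) with hF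
    have hFmono : Monotone F := fun u v huv => measure_mono (Set.Icc_subset_Icc le_rfl huv)
    have hFmeas : Measurable F := monotone_measurable hFmono
    -- pointwise estimate on the resolvent inside the integral
    have hpoint : ∀ u : S, u ∈ Set.Icc s t →
        res (· ≤ ·) μ (fun a b => k a b ^ p) n u s
          ≤ k t s ^ p / (Nat.factorial n : ℝ≥0∞) * F u ^ n := by
      intro u hu
      have h1 := ih s u hu.1
      have h2 : (∫⁻ v in {v : S | s ≤ v ∧ v ≤ u}, k u v ^ p ∂μ) ≤ F u := by
        have hFu : F u = ∫⁻ v in Set.Icc s u, k t v ^ p ∂μ := hνIcc u hu.2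
        rw [hFu]
        have : (∫⁻ v in Set.Icc s u, k u v ^ p ∂μ) ≤ ∫⁻ v in Set.Icc s u, k t v ^ p ∂μ := by
          refine setLIntegral_mono' (measurableSet_Icc' s u) fun v hv => ?_
          exact ENNReal.rpow_le_rpow (hmono v u t hv.2 hu.2) hp0
        exact this
      have h3 : k u s ^ p ≤ k t s ^ p := ENNReal.rpow_le_rpow (hmono s u t hu.1 hu.2) hp0
      calc res (· ≤ ·) μ (fun a b => k a b ^ p) n u s
          ≤ k u s ^ p / (Nat.factorial n : ℝ≥0∞)
              * (∫⁻ v in {v : S | s ≤ v ∧ v ≤ u}, k u v ^ p ∂μ) ^ n := h1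
        _ ≤ k t s ^ p / (Nat.factorial n : ℝ≥0∞) * F u ^ n := by
            refine mul_le_mul' (ENNReal.div_le_div_right h3 _) (pow_le_pow_left' h2 n)
    -- main computation
    have hres : res (· ≤ ·) μ (fun a b => k a b ^ p) (n + 1) t s
        = ∫⁻ u in {u : S | s ≤ u ∧ u ≤ t},
            k t u ^ p * res (· ≤ ·) μ (fun a b => k a b ^ p) n u s ∂μ := rfl
    have hkey := key_estimate ν hνatom s t hBfin n
    have hkey' : ∫⁻ u in Set.Icc s t, F u ^ n ∂ν
        ≤ (ν (Set.Icc s t)) ^ (n + 1) / ((n : ℝ≥0∞) + 1) := by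
      rw [ENNReal.le_div_iff_mul_le (Or.inl (by simp)) (Or.inl (by simp))]
      calc (∫⁻ u in Set.Icc s t, F u ^ n ∂ν) * ((n : ℝ≥0∞) + 1)
          = ((n : ℝ≥0∞) + 1) * ∫⁻ u in Set.Icc s t, F u ^ n ∂ν := mul_comm _ _
        _ ≤ (ν (Set.Icc s t)) ^ (n + 1) := hkey
    have hwd : ∫⁻ u in Set.Icc s t, g u * F u ^ n ∂μ = ∫⁻ u in Set.Icc s t, F u ^ n ∂ν := by
      rw [hν, restrict_withDensity (measurableSet_Icc' s t),
        lintegral_withDensity_eq_lintegral_mul _ hgmeas (hFmeas.pow_const n)]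
      rfl
    calc res (· ≤ ·) μ (fun a b => k a b ^ p) (n + 1) t s
        = ∫⁻ u in Set.Icc s t,
            k t u ^ p * res (· ≤ ·) μ (fun a b => k a b ^ p) n u s ∂μ := hres
      _ ≤ ∫⁻ u in Set.Icc s t,
            k t s ^ p / (Nat.factorial n : ℝ≥0∞) * (g u * F u ^ n) ∂μ := by
          refine setLIntegral_mono' (measurableSet_Icc' s t) fun u hu => ?_
          rw [hgval u hu.2]
          calc k t u ^ p * res (· ≤ ·) μ (fun a b => k a b ^ p) n u s
              ≤ k t u ^ p * (k t s ^ p / (Nat.factorial n : ℝ≥0∞) * F u ^ n) :=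
                mul_le_mul_right (hpoint u hu) _
            _ = k t s ^ p / (Nat.factorial n : ℝ≥0∞) * (k t u ^ p * F u ^ n) := by ring
      _ = k t s ^ p / (Nat.factorial n : ℝ≥0∞) * ∫⁻ u in Set.Icc s t, g u * F u ^ n ∂μ := by
          rw [lintegral_const_mul (f := fun u => g u * F u ^ n) _ (hgmeas.mul (hFmeas.pow_const n))]
      _ = k t s ^ p / (Nat.factorial n : ℝ≥0∞) * ∫⁻ u in Set.Icc s t, F u ^ n ∂ν := by
          rw [hwd]
      _ ≤ k t s ^ p / (Nat.factorial n : ℝ≥0∞)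
            * ((ν (Set.Icc s t)) ^ (n + 1) / ((n : ℝ≥0∞) + 1)) := mul_le_mul_right hkey' _
      _ = k t s ^ p / (Nat.factorial (n + 1) : ℝ≥0∞) * (ν (Set.Icc s t)) ^ (n + 1) := by
          rw [div_eq_mul_inv, div_eq_mul_inv, div_eq_mul_inv]
          rw [show ((Nat.factorial (n + 1) : ℝ≥0∞)) = ((n : ℝ≥0∞) + 1) * (Nat.factorial n : ℝ≥0∞)
            by rw [Nat.factorial_succ]; push_cast; ring]
          rw [ENNReal.mul_inv (Or.inl (by simp)) (Or.inl (by simp))]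
          ring
      _ = k t s ^ p / (Nat.factorial (n + 1) : ℝ≥0∞)
            * (∫⁻ u in {u : S | s ≤ u ∧ u ≤ t}, k t u ^ p ∂μ) ^ (n + 1) := by rw [hB]
end

section
/- Let I be a non-degenerate interval in ℝ with its Borel σ-field, ordered by the usual order, p ≥ 1, and μ a σ-finite Borel measure on I with μ({t}) = 0 for all t ∈ I. Let k be a non-negative kernel on I satisfying the monotonicity condition k(s̃,s) ≤ k(t,s) for all s ≤ s̃ ≤ t in I, and suppose ∫_{[s,t]} k(t,s̃)^p μ(ds̃) < ∞ for all s ≤ t in I. Then for each t ∈ I the series function satisfies I_{k,μ,p}(t) ≤ Σ_{n=1}^∞ (1/n!)^{1/p} (∫_{I(t)} k(t,s)^p μ(ds))^{n/p}, and the right-hand side is finite whenever ∫_{I(t)} k(t,s)^p μ(ds) < ∞. -/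
open MeasureTheory ENNReal Set

/-- Exact moment identity for finite atomless measures on ℝ. -/
lemma lemB : ∀ (m : ℕ) (ν : Measure ℝ) (_ : IsFiniteMeasure ν) (_ : ∀ x : ℝ, ν {x} = 0),
    ((m : ℝ≥0∞) + 1) * ∫⁻ x, (ν (Iic x)) ^ m ∂ν = (ν univ) ^ (m + 1) := by
  intro m
  induction m with
  | zero =>
    intro ν hfin hν
    simp [lintegral_one]
  | succ m IH =>
    intro ν hfin hν
    have hF : Measurable fun x => ν (Iic x) := by
      have h1 : ∀ x : ℝ, ν (Iic x)
          = ∫⁻ y, ({p : ℝ × ℝ | p.2 ≤ p.1}.indicator (fun _ => (1 : ℝ≥0∞))) (x, y) ∂ν := by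
        intro x
        have : ∀ y : ℝ, ({p : ℝ × ℝ | p.2 ≤ p.1}.indicator (fun _ => (1 : ℝ≥0∞))) (x, y)
            = (Iic x).indicator (fun _ => (1:ℝ≥0∞)) y := by
          intro y; simp [Set.indicator_apply, Set.mem_Iic]
        rw [lintegral_congr this, lintegral_indicator_const measurableSet_Iic]
        simp
      have hmeas : Measurable ({p : ℝ × ℝ | p.2 ≤ p.1}.indicator (fun _ => (1 : ℝ≥0∞))) :=
        (measurable_const.indicator (measurableSet_le measurable_snd measurable_fst))
      simpa [← h1] using Measurable.lintegral_prod_right' (ν := ν) hmeas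
    set F : ℝ → ℝ≥0∞ := fun x => ν (Iic x) with hFdef
    set c : ℝ≥0∞ := ν univ with hcdef
    have hFc : ∀ x, F x ≤ c := fun x => measure_mono (subset_univ _)
    have hIio : ∀ x, ν (Iio x) = F x := by
      intro x
      have : ν (Iic x) = ν (Iio x) + ν {x} := by
        rw [← Set.Iio_union_right, measure_union (by simp) (measurableSet_singleton x)]
      simp [hν x] at this
      exact this.symm
    -- double integral
    set φ : ℝ × ℝ → ℝ≥0∞ := fun z => {p : ℝ × ℝ | p.1 ≤ p.2}.indicator (fun p => F p.1 ^ m) z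
      with hφdef
    have hφmeas : Measurable φ :=
      ((hF.comp measurable_fst).pow_const m).indicator (measurableSet_le measurable_fst measurable_snd)
    have hswap : ∫⁻ y, ∫⁻ x, φ (y, x) ∂ν ∂ν = ∫⁻ x, ∫⁻ y, φ (y, x) ∂ν ∂ν :=
      lintegral_lintegral_swap hφmeas.aemeasurable
    have hinner1 : ∀ y : ℝ, ∫⁻ x, φ (y, x) ∂ν = F y ^ m * ν (Ici y) := by
      intro y
      have : ∀ x : ℝ, φ (y, x) = (Ici y).indicator (fun _ => F y ^ m) x := by
        intro x; simp [hφdef, Set.indicator_apply, Set.mem_Ici]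
      rw [lintegral_congr this, lintegral_indicator_const measurableSet_Ici]
    have hinner2 : ∀ x : ℝ, ∫⁻ y, φ (y, x) ∂ν = ∫⁻ y in Iic x, F y ^ m ∂ν := by
      intro x
      have : ∀ y : ℝ, φ (y, x) = (Iic x).indicator (fun y => F y ^ m) y := by
        intro y; simp [hφdef, Set.indicator_apply, Set.mem_Iic]
      rw [lintegral_congr this, lintegral_indicator measurableSet_Iic]
    -- apply IH to restricted measures
    have hH : ∀ x : ℝ, ((m : ℝ≥0∞) + 1) * ∫⁻ y in Iic x, F y ^ m ∂ν = F x ^ (m + 1) := by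
      intro x
      have hfin' : IsFiniteMeasure (ν.restrict (Iic x)) := inferInstance
      have hν' : ∀ z : ℝ, (ν.restrict (Iic x)) {z} = 0 := by
        intro z
        rw [Measure.restrict_apply (measurableSet_singleton z)]
        exact measure_mono_null Set.inter_subset_left (hν z)
      have := IH (ν.restrict (Iic x)) hfin' hν'
      rw [Measure.restrict_apply_univ] at this
      rw [← this]
      congr 1
      refine setLIntegral_congr_fun measurableSet_Iic ?_
      intro y hy
      beta_reduce; rw [Measure.restrict_apply measurableSet_Iic, Set.Iic_inter_Iic, min_eq_left hy]
    have hDL : ∫⁻ y, ∫⁻ x, φ (y, x) ∂ν ∂ν = ∫⁻ y, F y ^ m * ν (Ici y) ∂ν :=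
      lintegral_congr hinner1
    have hDR : ∫⁻ x, ∫⁻ y, φ (y, x) ∂ν ∂ν = ∫⁻ x, (∫⁻ y in Iic x, F y ^ m ∂ν) ∂ν :=
      lintegral_congr hinner2
    have hkey1 : ((m : ℝ≥0∞) + 1) * ∫⁻ x, (∫⁻ y in Iic x, F y ^ m ∂ν) ∂ν
        = ∫⁻ x, F x ^ (m + 1) ∂ν := by
      rw [← lintegral_const_mul' _ _ (by simp : ((m : ℝ≥0∞) + 1) ≠ ⊤)]
      exact lintegral_congr hH
    have e1 : ∫⁻ x, F x ^ (m + 1) ∂ν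
        = ((m : ℝ≥0∞) + 1) * ∫⁻ y, F y ^ m * ν (Ici y) ∂ν := by
      rw [← hkey1, ← hDR, ← hswap, hDL]
    have hkey2 : (∫⁻ y, F y ^ m * ν (Ici y) ∂ν) + ∫⁻ x, F x ^ (m + 1) ∂ν
        = c * ∫⁻ x, F x ^ m ∂ν := by
      rw [← lintegral_add_right _ (hF.pow_const (m + 1))]
      have hpt : ∀ y : ℝ, F y ^ m * ν (Ici y) + F y ^ (m + 1) = F y ^ m * c := by
        intro y
        rw [pow_succ, ← hIio y, ← mul_add]
        congr 1
        rw [show Iio y = (Ici y)ᶜ from (compl_Ici).symm]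
        exact measure_add_measure_compl measurableSet_Ici
      rw [lintegral_congr hpt, lintegral_mul_const' c _ (measure_ne_top ν univ), mul_comm]
    have hIH := IH ν hfin hν
    have final : ((m : ℝ≥0∞) + 2) * ∫⁻ x, F x ^ (m + 1) ∂ν = c ^ (m + 2) := by
      have expand : ((m : ℝ≥0∞) + 2) * ∫⁻ x, F x ^ (m + 1) ∂ν
          = ((m : ℝ≥0∞) + 1) * ((∫⁻ y, F y ^ m * ν (Ici y) ∂ν) + ∫⁻ x, F x ^ (m + 1) ∂ν) := by
        rw [mul_add, ← e1]; ring
      rw [expand, hkey2, show ((m : ℝ≥0∞) + 1) * (c * ∫⁻ x, F x ^ m ∂ν)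
        = c * (((m : ℝ≥0∞) + 1) * ∫⁻ x, F x ^ m ∂ν) by ring, hIH, ← pow_succ']
    have hcast : ((↑(m + 1) : ℝ≥0∞) + 1) = (m : ℝ≥0∞) + 2 := by push_cast; ring
    rw [hcast]
    convert final using 2

section Sub
variable {S : Set ℝ}

lemma measSet_Iic (t : S) : MeasurableSet (Iic t) := by
  have : Iic t = (Subtype.val : S → ℝ) ⁻¹' (Iic (t : ℝ)) := by
    ext v; simp [Set.mem_Iic]
  rw [this]
  exact measurable_subtype_coe measurableSet_Iic

lemma measSet_L (S : Set ℝ) : MeasurableSet {q : S × S | q.2 ≤ q.1} := by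
  have : {q : S × S | q.2 ≤ q.1}
      = (fun q : S × S => ((q.2 : ℝ), (q.1 : ℝ))) ⁻¹' {p : ℝ × ℝ | p.1 ≤ p.2} := by
    ext q; simp
  rw [this]
  exact ((measurable_subtype_coe.comp measurable_snd).prodMk
    (measurable_subtype_coe.comp measurable_fst)) (measurableSet_le measurable_fst measurable_snd)

lemma measSet_Icc' (s u : S) : MeasurableSet {v : S | s ≤ v ∧ v ≤ u} := by
  have : {v : S | s ≤ v ∧ v ≤ u}
      = (Subtype.val : S → ℝ) ⁻¹' (Icc (s : ℝ) (u : ℝ)) := by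
    ext v; simp [Set.mem_Icc]
  rw [this]
  exact measurable_subtype_coe measurableSet_Icc

/-- Transfer of lemB to a subtype of ℝ. -/
lemma lemB_S (m : ℕ) (ν : Measure S) [IsFiniteMeasure ν] (hν : ∀ x : S, ν {x} = 0) :
    ((m : ℝ≥0∞) + 1) * ∫⁻ v, (ν (Iic v)) ^ m ∂ν = (ν univ) ^ (m + 1) := by
  set ν' : Measure ℝ := ν.map Subtype.val with hν'def
  have hfin' : IsFiniteMeasure ν' := by
    constructor
    rw [Measure.map_apply measurable_subtype_coe MeasurableSet.univ]
    exact measure_lt_top ν _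
  have hatoms' : ∀ x : ℝ, ν' {x} = 0 := by
    intro x
    rw [Measure.map_apply measurable_subtype_coe (measurableSet_singleton x)]
    by_cases hx : x ∈ S
    · have : (Subtype.val : S → ℝ) ⁻¹' {x} = {(⟨x, hx⟩ : S)} := by
        ext u; simp [Subtype.ext_iff]
      rw [this]; exact hν _
    · have : (Subtype.val : S → ℝ) ⁻¹' {x} = (∅ : Set S) := by
        ext u; simp; rintro rfl; exact hx u.2
      rw [this]; simp
  have hIic : ∀ v : S, ν (Iic v) = ν' (Iic (v : ℝ)) := by
    intro v
    rw [Measure.map_apply measurable_subtype_coe measurableSet_Iic]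
    have : (Subtype.val : S → ℝ) ⁻¹' (Iic (v : ℝ)) = Iic v := by
      ext u; simp [Set.mem_Iic]
    rw [this]
  have huniv : ν univ = ν' univ := by
    rw [Measure.map_apply measurable_subtype_coe MeasurableSet.univ]; rfl
  have hF' : Measurable fun x : ℝ => ν' (Iic x) := by
    have h1 : ∀ x : ℝ, ν' (Iic x)
        = ∫⁻ y, ({p : ℝ × ℝ | p.2 ≤ p.1}.indicator (fun _ => (1 : ℝ≥0∞))) (x, y) ∂ν' := by
      intro x
      have : ∀ y : ℝ, ({p : ℝ × ℝ | p.2 ≤ p.1}.indicator (fun _ => (1 : ℝ≥0∞))) (x, y)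
          = (Iic x).indicator (fun _ => (1:ℝ≥0∞)) y := by
        intro y; simp [Set.indicator_apply, Set.mem_Iic]
      rw [lintegral_congr this, lintegral_indicator_const measurableSet_Iic]
      simp
    have hmeas : Measurable ({p : ℝ × ℝ | p.2 ≤ p.1}.indicator (fun _ => (1 : ℝ≥0∞))) :=
      (measurable_const.indicator (measurableSet_le measurable_snd measurable_fst))
    simpa [← h1] using Measurable.lintegral_prod_right' (ν := ν') hmeas
  have hmap : ∫⁻ v, (ν (Iic v)) ^ m ∂ν = ∫⁻ x, (ν' (Iic x)) ^ m ∂ν' := by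
    rw [hν'def, lintegral_map (hF'.pow_const m) measurable_subtype_coe]
    exact lintegral_congr fun v => by rw [hIic v]
  rw [hmap, huniv]
  exact lemB m ν' hfin' hatoms'

/-- measurability of `v ↦ ∫⁻ w in Iic v, g w ∂μ`. -/
lemma measG (μ : Measure S) [SigmaFinite μ] {g : S → ℝ≥0∞} (hg : Measurable g) :
    Measurable fun v : S => ∫⁻ w in Iic v, g w ∂μ := by
  have h1 : ∀ v : S, ∫⁻ w in Iic v, g w ∂μ
      = ∫⁻ w, ({q : S × S | q.2 ≤ q.1}.indicator (fun q => g q.2)) (v, w) ∂μ := by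
    intro v
    rw [← lintegral_indicator (measSet_Iic v)]
    refine lintegral_congr fun w => ?_
    simp [Set.indicator_apply, Set.mem_Iic]
  have hmeas : Measurable ({q : S × S | q.2 ≤ q.1}.indicator (fun q : S × S => g q.2)) :=
    (hg.comp measurable_snd).indicator (measSet_L S)
  simpa [← h1] using Measurable.lintegral_prod_right' (ν := μ) hmeas

/-- The Gronwall-type moment inequality on the subtype. -/
lemma lemA (μ : Measure S) [SigmaFinite μ] (hatom : ∀ x : S, μ {x} = 0)
    {g : S → ℝ≥0∞} (hg : Measurable g) (u : S) (m : ℕ) :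
    ∫⁻ v in Iic u, g v * (∫⁻ w in Iic v, g w ∂μ) ^ m ∂μ
      ≤ ((m + 1 : ℕ) : ℝ≥0∞)⁻¹ * (∫⁻ w in Iic u, g w ∂μ) ^ (m + 1) := by
  set ν : Measure S := (μ.restrict (Iic u)).withDensity g with hνdef
  have hν_apply : ∀ A : Set S, MeasurableSet A → ν A = ∫⁻ w in A ∩ Iic u, g w ∂μ := by
    intro A hA
    rw [hνdef, withDensity_apply g hA, Measure.restrict_restrict hA]
  have hνIic : ∀ v : S, v ∈ Iic u → ν (Iic v) = ∫⁻ w in Iic v, g w ∂μ := by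
    intro v hv
    rw [hν_apply _ (measSet_Iic v), Set.Iic_inter_Iic, min_eq_left hv]
  have hνuniv : ν univ = ∫⁻ w in Iic u, g w ∂μ := by
    rw [hν_apply _ MeasurableSet.univ, Set.univ_inter]
  by_cases hc : (∫⁻ w in Iic u, g w ∂μ) = ∞
  · rw [hc]
    have : ((∞ : ℝ≥0∞)) ^ (m + 1) = ∞ := by simp
    rw [this, ENNReal.mul_top (by simp : ((m + 1 : ℕ) : ℝ≥0∞)⁻¹ ≠ 0)]
    exact le_top
  · have hfinν : IsFiniteMeasure ν := by
      constructor; rw [hνuniv]; exact lt_top_iff_ne_top.mpr hc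
    have hatomν : ∀ x : S, ν {x} = 0 := by
      intro x
      rw [hν_apply _ (measurableSet_singleton x)]
      exact setLIntegral_measure_zero _ _ (measure_mono_null Set.inter_subset_left (hatom x))
    have hB := lemB_S m ν hatomν
    -- measurability of v ↦ ν (Iic v)
    have hνIic_meas : Measurable fun v : S => ν (Iic v) := by
      have : (fun v : S => ν (Iic v))
          = fun v : S => ∫⁻ w in Iic v, ((Iic u).indicator g) w ∂μ := by
        funext v
        rw [hν_apply _ (measSet_Iic v), ← lintegral_indicator (measSet_Iic v),
          ← lintegral_indicator ((measSet_Iic v).inter (measSet_Iic u))]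
        refine lintegral_congr fun w => ?_
        simp [Set.indicator_apply, Set.mem_Iic, Set.mem_inter_iff]
        by_cases h1 : w ≤ v <;> by_cases h2 : w ≤ u <;> simp [h1, h2]
      rw [this]
      exact measG μ (hg.indicator (measSet_Iic u))
    have hwd : ∫⁻ v, (ν (Iic v)) ^ m ∂ν
        = ∫⁻ v in Iic u, g v * (ν (Iic v)) ^ m ∂μ := by
      rw [hνdef, lintegral_withDensity_eq_lintegral_mul _ hg (hνIic_meas.pow_const m)]
      rfl
    have hcongr : ∫⁻ v in Iic u, g v * (ν (Iic v)) ^ m ∂μ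
        = ∫⁻ v in Iic u, g v * (∫⁻ w in Iic v, g w ∂μ) ^ m ∂μ := by
      refine setLIntegral_congr_fun (measSet_Iic u) ?_
      intro v hv
      beta_reduce; rw [hνIic v hv]
    rw [← hcongr, ← hwd]
    -- from hB : (m+1) * ∫ = (ν univ)^(m+1)
    have hne : ((m : ℝ≥0∞) + 1) ≠ 0 := by simp
    have hne' : ((m : ℝ≥0∞) + 1) ≠ ∞ := by simp
    have : ∫⁻ v, (ν (Iic v)) ^ m ∂ν = ((m : ℝ≥0∞) + 1)⁻¹ * (ν univ) ^ (m + 1) := by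
      rw [← hB, ← mul_assoc, ENNReal.inv_mul_cancel hne hne', one_mul]
    rw [this, hνuniv]
    apply le_of_eq
    congr 2
    push_cast; ring

variable (μ : Measure S) [SigmaFinite μ]

lemma res_succ' (r : S → S → Prop) (k : S → S → ℝ≥0∞) (n : ℕ) (t s : S) :
    res r μ k (n + 1) t s
      = ∫⁻ u in {u : S | r s u ∧ r u t}, k t u * res r μ k n u s ∂μ := rfl

lemma resM {g : S → ℝ≥0∞} (hg : Measurable g) :
    ∀ n : ℕ, Measurable fun q : S × S => res (· ≤ ·) μ (fun _ b => g b) n q.1 q.2 := by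
  intro n
  induction n with
  | zero => exact hg.comp measurable_snd
  | succ n IH =>
    have hT : MeasurableSet {z : (S × S) × S | z.1.2 ≤ z.2 ∧ z.2 ≤ z.1.1} := by
      have : {z : (S × S) × S | z.1.2 ≤ z.2 ∧ z.2 ≤ z.1.1}
          = ((fun z : (S × S) × S => (z.2, z.1.2)) ⁻¹' {q : S × S | q.2 ≤ q.1})
            ∩ ((fun z : (S × S) × S => (z.1.1, z.2)) ⁻¹' {q : S × S | q.2 ≤ q.1}) := by
        ext z; simp [Set.mem_setOf_eq]
      rw [this]
      exact (MeasurableSet.preimage (measSet_L S)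
          (measurable_snd.prodMk (measurable_snd.comp measurable_fst))).inter
        (MeasurableSet.preimage (measSet_L S)
          ((measurable_fst.comp measurable_fst).prodMk measurable_snd))
    have hΦ : Measurable fun z : (S × S) × S =>
        ({z : (S × S) × S | z.1.2 ≤ z.2 ∧ z.2 ≤ z.1.1}).indicator
          (fun z => g z.2 * res (· ≤ ·) μ (fun _ b => g b) n z.2 z.1.2) z :=
      ((hg.comp measurable_snd).mul
        (IH.comp (measurable_snd.prodMk (measurable_snd.comp measurable_fst)))).indicator hT
    have heq : (fun q : S × S => res (· ≤ ·) μ (fun _ b => g b) (n + 1) q.1 q.2)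
        = fun q : S × S => ∫⁻ v,
            ({z : (S × S) × S | z.1.2 ≤ z.2 ∧ z.2 ≤ z.1.1}).indicator
              (fun z => g z.2 * res (· ≤ ·) μ (fun _ b => g b) n z.2 z.1.2) (q, v) ∂μ := by
      funext q
      rw [res_succ' μ _ _ n q.1 q.2, ← lintegral_indicator (measSet_Icc' q.2 q.1)]
      refine lintegral_congr fun v => ?_
      simp only [Set.indicator_apply, Set.mem_setOf_eq]
    rw [heq]
    exact Measurable.lintegral_prod_right' (ν := μ) hΦ

lemma recB {g : S → ℝ≥0∞} (hg : Measurable g) (n : ℕ) (u : S) :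
    ∫⁻ s in Iic u, res (· ≤ ·) μ (fun _ b => g b) (n + 1) u s ∂μ
      = ∫⁻ v in Iic u, g v * ∫⁻ s in Iic v, res (· ≤ ·) μ (fun _ b => g b) n v s ∂μ ∂μ := by
  have hRmeas : Measurable fun q : S × S => res (· ≤ ·) μ (fun _ b => g b) n q.1 q.2 :=
    resM μ hg n
  have hTf : MeasurableSet {z : S × S | z.1 ≤ z.2 ∧ z.2 ≤ u} := by
    have : {z : S × S | z.1 ≤ z.2 ∧ z.2 ≤ u}
        = ((fun z : S × S => (z.2, z.1)) ⁻¹' {q : S × S | q.2 ≤ q.1})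
          ∩ ((fun z : S × S => z.2) ⁻¹' Iic u) := by
      ext z; simp [Set.mem_setOf_eq, Set.mem_Iic]
    rw [this]
    exact (MeasurableSet.preimage (measSet_L S)
        (measurable_snd.prodMk measurable_fst)).inter
      (MeasurableSet.preimage (measSet_Iic u) measurable_snd)
  have hf : Measurable fun z : S × S =>
      ({z : S × S | z.1 ≤ z.2 ∧ z.2 ≤ u}).indicator
        (fun z => g z.2 * res (· ≤ ·) μ (fun _ b => g b) n z.2 z.1) z :=
    ((hg.comp measurable_snd).mul
      (hRmeas.comp (measurable_snd.prodMk measurable_fst))).indicator hTf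
  have hL : ∫⁻ s in Iic u, res (· ≤ ·) μ (fun _ b => g b) (n + 1) u s ∂μ
      = ∫⁻ s, ∫⁻ v, ({z : S × S | z.1 ≤ z.2 ∧ z.2 ≤ u}).indicator
          (fun z => g z.2 * res (· ≤ ·) μ (fun _ b => g b) n z.2 z.1) (s, v) ∂μ ∂μ := by
    rw [← lintegral_indicator (measSet_Iic u)]
    refine lintegral_congr fun s => ?_
    by_cases hs : s ≤ u
    · rw [Set.indicator_of_mem (Set.mem_Iic.mpr hs), res_succ' μ _ _ n u s,
        ← lintegral_indicator (measSet_Icc' s u)]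
      refine lintegral_congr fun v => ?_
      simp only [Set.indicator_apply, Set.mem_setOf_eq]
    · rw [Set.indicator_of_notMem (fun hc => hs (Set.mem_Iic.mp hc))]
      have hz : ∀ v : S, ({z : S × S | z.1 ≤ z.2 ∧ z.2 ≤ u}).indicator
          (fun z => g z.2 * res (· ≤ ·) μ (fun _ b => g b) n z.2 z.1) (s, v) = 0 := by
        intro v
        exact Set.indicator_of_notMem (fun hc => hs (le_trans hc.1 hc.2)) _
      rw [lintegral_congr hz, lintegral_zero]
  have hR : ∫⁻ v, ∫⁻ s, ({z : S × S | z.1 ≤ z.2 ∧ z.2 ≤ u}).indicator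
        (fun z => g z.2 * res (· ≤ ·) μ (fun _ b => g b) n z.2 z.1) (s, v) ∂μ ∂μ
      = ∫⁻ v in Iic u, g v * ∫⁻ s in Iic v, res (· ≤ ·) μ (fun _ b => g b) n v s ∂μ ∂μ := by
    rw [← lintegral_indicator (measSet_Iic u)]
    refine lintegral_congr fun v => ?_
    by_cases hv : v ≤ u
    · rw [Set.indicator_of_mem (Set.mem_Iic.mpr hv)]
      have h1 : ∀ s : S, ({z : S × S | z.1 ≤ z.2 ∧ z.2 ≤ u}).indicator
          (fun z => g z.2 * res (· ≤ ·) μ (fun _ b => g b) n z.2 z.1) (s, v)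
          = (Iic v).indicator (fun s => g v * res (· ≤ ·) μ (fun _ b => g b) n v s) s := by
        intro s
        simp only [Set.indicator_apply, Set.mem_setOf_eq, Set.mem_Iic]
        by_cases h : s ≤ v
        · simp [h, hv]
        · simp [h]
      have hm : Measurable fun s : S => res (· ≤ ·) μ (fun _ b => g b) n v s :=
        hRmeas.comp (measurable_const.prodMk measurable_id)
      rw [lintegral_congr h1, lintegral_indicator (measSet_Iic v), lintegral_const_mul _ hm]
    · rw [Set.indicator_of_notMem (fun hc => hv (Set.mem_Iic.mp hc))]
      have hz : ∀ s : S, ({z : S × S | z.1 ≤ z.2 ∧ z.2 ≤ u}).indicator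
          (fun z => g z.2 * res (· ≤ ·) μ (fun _ b => g b) n z.2 z.1) (s, v) = 0 := by
        intro s
        exact Set.indicator_of_notMem (fun hc => hv hc.2) _
      rw [lintegral_congr hz, lintegral_zero]
  rw [hL, lintegral_lintegral_swap hf.aemeasurable, hR]

lemma Bbound (hatom : ∀ x : S, μ {x} = 0) {g : S → ℝ≥0∞} (hg : Measurable g) :
    ∀ (n : ℕ) (u : S), ∫⁻ s in Iic u, res (· ≤ ·) μ (fun _ b => g b) n u s ∂μ
      ≤ (((n + 1).factorial : ℕ) : ℝ≥0∞)⁻¹ * (∫⁻ w in Iic u, g w ∂μ) ^ (n + 1) := by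
  intro n
  induction n with
  | zero =>
    intro u
    have h1 : ((((0:ℕ) + 1).factorial : ℕ) : ℝ≥0∞)⁻¹ = 1 := by norm_num
    rw [h1, one_mul, pow_one]
    exact le_of_eq rfl
  | succ n IH =>
    intro u
    rw [recB μ hg n u]
    have step1 : ∫⁻ v in Iic u, g v * ∫⁻ s in Iic v, res (· ≤ ·) μ (fun _ b => g b) n v s ∂μ ∂μ
        ≤ ∫⁻ v in Iic u, (((n + 1).factorial : ℕ) : ℝ≥0∞)⁻¹
            * (g v * (∫⁻ w in Iic v, g w ∂μ) ^ (n + 1)) ∂μ := by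
      refine setLIntegral_mono' (measSet_Iic u) fun v _ => ?_
      calc g v * ∫⁻ s in Iic v, res (· ≤ ·) μ (fun _ b => g b) n v s ∂μ
          ≤ g v * ((((n + 1).factorial : ℕ) : ℝ≥0∞)⁻¹ * (∫⁻ w in Iic v, g w ∂μ) ^ (n + 1)) :=
            mul_le_mul_right (IH v) _
        _ = (((n + 1).factorial : ℕ) : ℝ≥0∞)⁻¹ * (g v * (∫⁻ w in Iic v, g w ∂μ) ^ (n + 1)) := by
            ring
    have step2 : ∫⁻ v in Iic u, (((n + 1).factorial : ℕ) : ℝ≥0∞)⁻¹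
          * (g v * (∫⁻ w in Iic v, g w ∂μ) ^ (n + 1)) ∂μ
        = (((n + 1).factorial : ℕ) : ℝ≥0∞)⁻¹
          * ∫⁻ v in Iic u, g v * (∫⁻ w in Iic v, g w ∂μ) ^ (n + 1) ∂μ :=
      lintegral_const_mul' _ _ (ENNReal.inv_ne_top.mpr (Nat.cast_ne_zero.mpr (Nat.factorial_ne_zero _)))
    have step3 := lemA μ hatom hg u (n + 1)
    calc ∫⁻ v in Iic u, g v * ∫⁻ s in Iic v, res (· ≤ ·) μ (fun _ b => g b) n v s ∂μ ∂μ
        ≤ (((n + 1).factorial : ℕ) : ℝ≥0∞)⁻¹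
          * ∫⁻ v in Iic u, g v * (∫⁻ w in Iic v, g w ∂μ) ^ (n + 1) ∂μ := by
          rw [← step2]; exact step1
      _ ≤ (((n + 1).factorial : ℕ) : ℝ≥0∞)⁻¹
          * (((n + 1 + 1 : ℕ) : ℝ≥0∞)⁻¹ * (∫⁻ w in Iic u, g w ∂μ) ^ (n + 1 + 1)) :=
          mul_le_mul_right step3 _
      _ = (((n + 1 + 1).factorial : ℕ) : ℝ≥0∞)⁻¹ * (∫⁻ w in Iic u, g w ∂μ) ^ (n + 1 + 1) := by
          rw [← mul_assoc]
          congr 1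
          rw [show (n + 1 + 1).factorial = (n + 1 + 1) * (n + 1).factorial from rfl]
          push_cast
          rw [ENNReal.mul_inv (by simp) (by simp)]
          ring

lemma res_cmp {p : ℝ} (hp : 0 ≤ p) (k : S → S → ℝ≥0∞)
    (hmono : ∀ s s' t : S, s ≤ s' → s' ≤ t → k s' s ≤ k t s) (t : S)
    {g : S → ℝ≥0∞} (hg_eq : ∀ b : S, b ≤ t → g b = k t b ^ p) :
    ∀ (n : ℕ) (u s : S), s ≤ u → u ≤ t →
      res (· ≤ ·) μ (fun a b => k a b ^ p) n u s ≤ res (· ≤ ·) μ (fun _ b => g b) n u s := by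
  intro n
  induction n with
  | zero =>
    intro u s hsu hut
    show k u s ^ p ≤ g s
    rw [hg_eq s (hsu.trans hut)]
    exact ENNReal.rpow_le_rpow (hmono s u t hsu hut) hp
  | succ n IH =>
    intro u s hsu hut
    rw [res_succ', res_succ']
    refine setLIntegral_mono' (measSet_Icc' s u) fun v hv => ?_
    have hvt : v ≤ t := le_trans hv.2 hut
    refine mul_le_mul' ?_ (IH v s hv.1 hvt)
    show k u v ^ p ≤ g v
    rw [hg_eq v hvt]
    exact ENNReal.rpow_le_rpow (hmono v u t hv.2 hut) hp

end Sub

lemma tail_fin (p : ℝ) (hp : 1 ≤ p) (C : ℝ≥0∞) (hC : C < ∞) :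
    (∑' n : ℕ, ((Nat.factorial (n + 1) : ℝ≥0∞))⁻¹ ^ (1 / p) * C ^ (((n : ℝ) + 1) / p)) < ∞ := by
  have hp0 : (0:ℝ) < p := lt_of_lt_of_le one_pos hp
  have hip : (0:ℝ) ≤ 1 / p := by positivity
  set a : ℝ≥0∞ := C ^ (1 / p) with hadef
  have ha : a ≠ ∞ := (ENNReal.rpow_lt_top_of_nonneg hip hC.ne).ne
  have hterm : ∀ n : ℕ, ((Nat.factorial (n + 1) : ℝ≥0∞))⁻¹ ^ (1 / p) * C ^ (((n : ℝ) + 1) / p)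
      = ((Nat.factorial (n + 1) : ℝ≥0∞))⁻¹ ^ (1 / p) * a ^ (n + 1) := by
    intro n
    congr 1
    rw [hadef, ← ENNReal.rpow_natCast _ (n + 1), ← ENNReal.rpow_mul]
    congr 1
    push_cast
    field_simp
  set f : ℕ → ℝ≥0∞ := fun n => ((Nat.factorial (n + 1) : ℝ≥0∞))⁻¹ ^ (1 / p) * a ^ (n + 1)
    with hfdef
  have h2a : (2 * a) ≠ ∞ := ENNReal.mul_ne_top (by simp) ha
  have hb : (2 * a) ^ p ≠ ∞ := (ENNReal.rpow_lt_top_of_nonneg (le_of_lt hp0) h2a).ne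
  set N : ℕ := ⌈((2 * a) ^ p).toReal⌉₊ with hNdef
  have hNce : ∀ n, N ≤ n → 2 * a ≤ ((n + 2 : ℕ) : ℝ≥0∞) ^ (1 / p) := by
    intro n hn
    have h1 : (2 * a) ^ p ≤ ((n + 2 : ℕ) : ℝ≥0∞) :=
      calc (2 * a) ^ p = ENNReal.ofReal (((2 * a) ^ p).toReal) := (ENNReal.ofReal_toReal hb).symm
        _ ≤ ENNReal.ofReal (N : ℝ) := ENNReal.ofReal_le_ofReal (Nat.le_ceil _)
        _ = (N : ℝ≥0∞) := ENNReal.ofReal_natCast N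
        _ ≤ ((n + 2 : ℕ) : ℝ≥0∞) := Nat.cast_le.mpr (by omega)
    calc 2 * a = ((2 * a) ^ p) ^ (1 / p) := by
          rw [← ENNReal.rpow_mul, mul_one_div, div_self hp0.ne', ENNReal.rpow_one]
      _ ≤ ((n + 2 : ℕ) : ℝ≥0∞) ^ (1 / p) := ENNReal.rpow_le_rpow h1 hip
  have hstep : ∀ n, N ≤ n → f (n + 1) ≤ f n * 2⁻¹ := by
    intro n hn
    have hd0 : ((n + 2 : ℕ) : ℝ≥0∞) ^ (1 / p) ≠ 0 := by
      refine ne_of_gt (ENNReal.rpow_pos ?_ (ENNReal.natCast_ne_top _))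
      exact_mod_cast Nat.succ_pos (n + 1)
    have hdt : ((n + 2 : ℕ) : ℝ≥0∞) ^ (1 / p) ≠ ∞ :=
      (ENNReal.rpow_lt_top_of_nonneg hip (ENNReal.natCast_ne_top _)).ne
    have hfac : ((Nat.factorial (n + 2) : ℝ≥0∞))⁻¹
        = ((Nat.factorial (n + 1) : ℝ≥0∞))⁻¹ * (((n + 2 : ℕ)) : ℝ≥0∞)⁻¹ := by
      rw [show Nat.factorial (n + 2) = (n + 2) * Nat.factorial (n + 1) from rfl]
      push_cast
      rw [ENNReal.mul_inv (by simp) (by simp)]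
      ring
    have hkey : (((n + 2 : ℕ)) : ℝ≥0∞)⁻¹ ^ (1 / p) * a ≤ 2⁻¹ := by
      rw [ENNReal.inv_rpow]
      have h2 : a ≤ ((n + 2 : ℕ) : ℝ≥0∞) ^ (1 / p) * 2⁻¹ := by
        calc a = 2⁻¹ * (2 * a) := by
              rw [← mul_assoc, ENNReal.inv_mul_cancel (by simp) (by simp), one_mul]
          _ ≤ 2⁻¹ * (((n + 2 : ℕ) : ℝ≥0∞)) ^ (1 / p) := mul_le_mul_right (hNce n hn) _
          _ = ((n + 2 : ℕ) : ℝ≥0∞) ^ (1 / p) * 2⁻¹ := mul_comm _ _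
      calc (((n + 2 : ℕ) : ℝ≥0∞) ^ (1 / p))⁻¹ * a
          ≤ (((n + 2 : ℕ) : ℝ≥0∞) ^ (1 / p))⁻¹ * (((n + 2 : ℕ) : ℝ≥0∞) ^ (1 / p) * 2⁻¹) :=
            mul_le_mul_right h2 _
        _ = 2⁻¹ := by rw [← mul_assoc, ENNReal.inv_mul_cancel hd0 hdt, one_mul]
    have hexp : f (n + 1) = f n * ((((n + 2 : ℕ)) : ℝ≥0∞)⁻¹ ^ (1 / p) * a) := by
      simp only [hfdef]
      rw [show n + 1 + 1 = n + 2 from rfl, hfac, ENNReal.mul_rpow_of_nonneg _ _ hip, pow_succ]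
      ring
    rw [hexp]
    exact mul_le_mul_right hkey _
  have htail : ∀ j : ℕ, f (N + j) ≤ f N * 2⁻¹ ^ j := by
    intro j
    induction j with
    | zero => simp
    | succ j IHj =>
      calc f (N + (j + 1)) = f ((N + j) + 1) := by rw [show N + (j+1) = (N + j) + 1 from rfl]
        _ ≤ f (N + j) * 2⁻¹ := hstep _ (by omega)
        _ ≤ (f N * 2⁻¹ ^ j) * 2⁻¹ := mul_le_mul_left IHj _
        _ = f N * 2⁻¹ ^ (j + 1) := by rw [pow_succ]; ring
  set M : ℝ≥0∞ := (max 1 a) ^ (N + 1) with hMdef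
  have hmaxne : (max 1 a) ≠ ∞ :=
    (max_lt ENNReal.one_lt_top (lt_top_iff_ne_top.mpr ha)).ne
  have hM : M ≠ ∞ := ENNReal.pow_ne_top hmaxne
  have hfac1 : ∀ n : ℕ, ((Nat.factorial (n + 1) : ℝ≥0∞))⁻¹ ^ (1 / p) ≤ 1 := by
    intro n
    have h1 : ((Nat.factorial (n + 1) : ℝ≥0∞))⁻¹ ≤ 1 := by
      apply ENNReal.inv_le_one.mpr
      have h2 := Nat.one_le_iff_ne_zero.mpr (Nat.factorial_ne_zero (n + 1))
      exact_mod_cast h2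
    calc ((Nat.factorial (n + 1) : ℝ≥0∞))⁻¹ ^ (1 / p) ≤ (1 : ℝ≥0∞) ^ (1 / p) :=
          ENNReal.rpow_le_rpow h1 hip
      _ = 1 := ENNReal.one_rpow _
  have hfM : ∀ n, f n ≤ (max 1 a) ^ (n + 1) := by
    intro n
    simp only [hfdef]
    calc ((Nat.factorial (n + 1) : ℝ≥0∞))⁻¹ ^ (1 / p) * a ^ (n + 1)
        ≤ 1 * (max 1 a) ^ (n + 1) :=
          mul_le_mul' (hfac1 n) (pow_le_pow_left' (le_max_right 1 a) _)
      _ = (max 1 a) ^ (n + 1) := one_mul _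
  have h2Nne : ((2:ℝ≥0∞) ^ N) ≠ ∞ := ENNReal.pow_ne_top (by simp)
  have h2N0 : ((2:ℝ≥0∞) ^ N) ≠ 0 := by positivity
  have hcancel : (2:ℝ≥0∞) ^ N * 2⁻¹ ^ N = 1 := by
    rw [← ENNReal.inv_pow, ENNReal.mul_inv_cancel h2N0 h2Nne]
  have hbound : ∀ n, f n ≤ (M * 2 ^ N) * 2⁻¹ ^ n := by
    intro n
    rcases le_or_gt N n with h | h
    · obtain ⟨j, rfl⟩ : ∃ j, n = N + j := ⟨n - N, by omega⟩
      calc f (N + j) ≤ f N * 2⁻¹ ^ j := htail j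
        _ ≤ M * 2⁻¹ ^ j := mul_le_mul_left (hfM N) _
        _ = (M * 2 ^ N) * 2⁻¹ ^ (N + j) := by
            rw [pow_add]
            calc M * 2⁻¹ ^ j = M * ((2:ℝ≥0∞) ^ N * 2⁻¹ ^ N) * 2⁻¹ ^ j := by
                  rw [hcancel, mul_one]
              _ = (M * 2 ^ N) * (2⁻¹ ^ N * 2⁻¹ ^ j) := by ring
    · calc f n ≤ (max 1 a) ^ (n + 1) := hfM n
        _ ≤ M := by
            rw [hMdef]
            exact pow_le_pow_right₀ (le_max_left 1 a) (by omega)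
        _ ≤ (M * 2 ^ N) * 2⁻¹ ^ n := by
            have h1 : (1 : ℝ≥0∞) ≤ 2 ^ N * 2⁻¹ ^ n := by
              have h2 : (2:ℝ≥0∞)⁻¹ ^ N ≤ 2⁻¹ ^ n :=
                pow_le_pow_of_le_one (by simp) (ENNReal.inv_le_one.mpr (by norm_num)) (by omega)
              calc (1:ℝ≥0∞) = 2 ^ N * 2⁻¹ ^ N := hcancel.symm
                _ ≤ 2 ^ N * 2⁻¹ ^ n := mul_le_mul_right h2 _
            calc M = M * 1 := (mul_one M).symm
              _ ≤ M * (2 ^ N * 2⁻¹ ^ n) := mul_le_mul_right h1 _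
              _ = (M * 2 ^ N) * 2⁻¹ ^ n := by ring
  have hsum : ∑' n, f n ≤ (M * 2 ^ N) * ∑' n : ℕ, (2:ℝ≥0∞)⁻¹ ^ n := by
    rw [← ENNReal.tsum_mul_left]
    exact ENNReal.tsum_le_tsum hbound
  have hgeo : ∑' n : ℕ, (2:ℝ≥0∞)⁻¹ ^ n = (1 - 2⁻¹)⁻¹ := ENNReal.tsum_geometric 2⁻¹
  have hgeofin : ((1:ℝ≥0∞) - 2⁻¹)⁻¹ ≠ ∞ := by
    rw [ENNReal.one_sub_inv_two]
    simp
  calc (∑' n : ℕ, ((Nat.factorial (n + 1) : ℝ≥0∞))⁻¹ ^ (1 / p) * C ^ (((n : ℝ) + 1) / p))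
      = ∑' n, f n := tsum_congr hterm
    _ ≤ (M * 2 ^ N) * ∑' n : ℕ, (2:ℝ≥0∞)⁻¹ ^ n := hsum
    _ < ∞ := by
        rw [hgeo]
        exact ENNReal.mul_lt_top
          (ENNReal.mul_lt_top (lt_top_iff_ne_top.mpr hM) (lt_top_iff_ne_top.mpr h2Nne))
          (lt_top_iff_ne_top.mpr hgeofin)

/-- **Series function bound for regular kernels on intervals** (Example 4, estimate (14)):
in the setting of a non-degenerate real interval with an atomless σ-finite Borel measure
and a monotone kernel `k` with `∫_{[s,t]} k(t,u)^p μ(du) < ∞`, the series function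
satisfies `I_{k,μ,p}(t) ≤ ∑_{n=1}^∞ (1/n!)^{1/p} (∫_{I(t)} k(t,s)^p μ(ds))^{n/p}`, and
the right-hand side is finite whenever `∫_{I(t)} k(t,s)^p μ(ds) < ∞`
(the summation index is shifted by one: `res … n = R_{·,n+1}` and the `n`-th summand
of the bound corresponds to the paper's summand `n + 1`). -/
theorem regular_kernel_series_function_bound
    (S : Set ℝ) (hconn : S.OrdConnected) (hnd : ∃ a ∈ S, ∃ b ∈ S, a ≠ b)
    (μ : Measure S) [SigmaFinite μ] (hatom : ∀ x : S, μ {x} = 0)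
    (p : ℝ) (hp : 1 ≤ p)
    (k : S → S → ℝ≥0∞)
    (hk : Measurable fun q : {q : S × S // q.2 ≤ q.1} => k q.1.1 q.1.2)
    (hmono : ∀ s s' t : S, s ≤ s' → s' ≤ t → k s' s ≤ k t s)
    (hfin : ∀ s t : S, s ≤ t → (∫⁻ u in {u : S | s ≤ u ∧ u ≤ t}, k t u ^ p ∂μ) < ∞) :
    ∀ t : S,
      (∑' n : ℕ,
        (∫⁻ s in {s : S | s ≤ t},
          res (· ≤ ·) μ (fun a b => k a b ^ p) n t s ∂μ) ^ (1 / p))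
        ≤ ∑' n : ℕ,
            ((Nat.factorial (n + 1) : ℝ≥0∞))⁻¹ ^ (1 / p)
              * (∫⁻ s in {s : S | s ≤ t}, k t s ^ p ∂μ) ^ (((n : ℝ) + 1) / p) ∧
      ((∫⁻ s in {s : S | s ≤ t}, k t s ^ p ∂μ) < ∞ →
        (∑' n : ℕ,
          ((Nat.factorial (n + 1) : ℝ≥0∞))⁻¹ ^ (1 / p)
            * (∫⁻ s in {s : S | s ≤ t}, k t s ^ p ∂μ) ^ (((n : ℝ) + 1) / p)) < ∞) := by
  intro t
  have hp0 : (0:ℝ) < p := lt_of_lt_of_le one_pos hp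
  have hip : (0:ℝ) ≤ 1 / p := by positivity
  have hA : MeasurableSet (Iic t) := measSet_Iic t
  have hφ : Measurable fun b : ↥(Iic t) => k t b.1 ^ p := by
    have hm : Measurable fun b : ↥(Iic t) =>
        (⟨(t, b.1), b.2⟩ : {q : S × S // q.2 ≤ q.1}) :=
      Measurable.subtype_mk (measurable_const.prodMk measurable_subtype_coe)
    exact (hk.comp hm).pow_const p
  set g : S → ℝ≥0∞ :=
    Function.extend (Subtype.val : ↥(Iic t) → S) (fun b => k t b.1 ^ p) (fun _ => 0)
    with hgdef
  have hg : Measurable g :=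
    (MeasurableEmbedding.subtype_coe hA).measurable_extend hφ measurable_const
  have hg_eq : ∀ b : S, b ≤ t → g b = k t b ^ p := by
    intro b hb
    have hb' : b = (Subtype.val (⟨b, Set.mem_Iic.mpr hb⟩ : ↥(Iic t))) := rfl
    rw [hgdef, hb', Subtype.coe_injective.extend_apply]
  have hset : {s : S | s ≤ t} = Iic t := rfl
  have hC : ∫⁻ s in {s : S | s ≤ t}, k t s ^ p ∂μ = ∫⁻ w in Iic t, g w ∂μ := by
    rw [hset]
    exact setLIntegral_congr_fun hA
      (fun s hs => (hg_eq s (Set.mem_Iic.mp hs)).symm)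
  constructor
  · refine ENNReal.tsum_le_tsum fun n => ?_
    have h1 : ∫⁻ s in {s : S | s ≤ t}, res (· ≤ ·) μ (fun a b => k a b ^ p) n t s ∂μ
        ≤ ∫⁻ s in Iic t, res (· ≤ ·) μ (fun _ b => g b) n t s ∂μ := by
      rw [hset]
      exact setLIntegral_mono' hA fun s hs =>
        res_cmp μ (le_of_lt hp0) k hmono t hg_eq n t s (Set.mem_Iic.mp hs) le_rfl
    have h2 := Bbound μ hatom hg n t
    refine le_trans (ENNReal.rpow_le_rpow (le_trans h1 h2) hip) ?_
    rw [ENNReal.mul_rpow_of_nonneg _ _ hip, hC]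
    apply le_of_eq
    congr 1
    rw [← ENNReal.rpow_natCast _ (n + 1), ← ENNReal.rpow_mul]
    congr 1
    push_cast
    field_simp
  · intro hCfin
    exact tail_fin p hp _ hCfin
end

section
/- For every n ∈ ℕ and j ∈ {1,…,N}^n, the function f_{n,j} takes all its values in (0,∞), is decreasing in its second variable, is continuous, and satisfies f_{n,j}(x,y) ≤ c_{n,j} · x^{β_{j_1} − 1 + Σ_{i=1}^n (α_{j_i} − β_{j_i})} · y^{−β_{j_1}} for all x, y > 0, where c_{n,j} := Π_{i=1}^{n−1} B(α_{j_1} − β_{j_2} + ⋯ + α_{j_i} − β_{j_{i+1}}, α_{j_{i+1}}) with B the Beta function. Equality holds in this estimate if β_{j_1} = ⋯ = β_{j_n} = 0. -/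
open MeasureTheory ENNReal Real

/-- The recursively defined family of functions `f_{n,j}` of Proposition 2 of the paper.
A multi-index of length `n + 1` is represented by a function `j : ℕ → Fin N`, only
whose values `j 0, …, j n` matter; `ffam N α β n j` corresponds to the paper's
`f_{n+1,(j₁,…,j_{n+1})}`. -/
noncomputable def ffam (N : ℕ) (α β : Fin N → ℝ) : ℕ → (ℕ → Fin N) → ℝ → ℝ → ℝ≥0∞
  | 0, j, x, y => ENNReal.ofReal (x ^ (α (j 0) - 1) * y ^ (-β (j 0)))
  | n + 1, j, x, y =>
      ENNReal.ofReal (x ^ α (j (n + 1))) *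
        ∫⁻ l in Set.Ioo (0 : ℝ) 1,
          ENNReal.ofReal ((1 - l) ^ (α (j (n + 1)) - 1) * (l * x + y) ^ (-β (j (n + 1))))
            * ffam N α β n j (l * x) y

/-- The Euler Beta function `B(a,b) = Γ(a) Γ(b) / Γ(a + b)`. -/
noncomputable def Beta (a b : ℝ) : ℝ := Real.Gamma a * Real.Gamma b / Real.Gamma (a + b)

/-- The constant `c_{n,j} = ∏_{i=1}^{n-1} B(α_{j₁} - β_{j₂} + ⋯ + α_{j_i} - β_{j_{i+1}}, α_{j_{i+1}})`;
here `cval N α β n j` corresponds to the paper's `c_{n+1,j}`. -/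
noncomputable def cval (N : ℕ) (α β : Fin N → ℝ) (n : ℕ) (j : ℕ → Fin N) : ℝ :=
  ∏ i ∈ Finset.range n,
    Beta (∑ h ∈ Finset.range (i + 1), (α (j h) - β (j (h + 1)))) (α (j (i + 1)))

lemma Beta_pos {a b : ℝ} (ha : 0 < a) (hb : 0 < b) : 0 < Beta a b :=
  div_pos (mul_pos (Real.Gamma_pos_of_pos ha) (Real.Gamma_pos_of_pos hb))
    (Real.Gamma_pos_of_pos (by linarith))

lemma beta_eq_integral {a b : ℝ} (ha : 0 < a) (hb : 0 < b) :
    Beta a b = ∫ l in (0:ℝ)..1, l ^ (a - 1) * (1 - l) ^ (b - 1) := by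
  have key := Complex.Gamma_mul_Gamma_eq_betaIntegral (s := (a:ℂ)) (t := (b:ℂ))
    (by simpa using ha) (by simpa using hb)
  have hint : Complex.betaIntegral (a:ℂ) (b:ℂ)
      = ((∫ l in (0:ℝ)..1, l ^ (a - 1) * (1 - l) ^ (b - 1) : ℝ) : ℂ) := by
    rw [Complex.betaIntegral, ← intervalIntegral.integral_ofReal]
    refine intervalIntegral.integral_congr fun x hx => ?_
    rw [Set.uIcc_of_le (by norm_num : (0:ℝ) ≤ 1)] at hx
    have h1 : (0:ℝ) ≤ 1 - x := by linarith [hx.2]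
    have e : ((x ^ (a-1) * (1-x)^(b-1) : ℝ) : ℂ)
        = (x:ℂ) ^ ((a:ℂ) - 1) * (1 - (x:ℂ)) ^ ((b:ℂ) - 1) := by
      rw [Complex.ofReal_mul, Complex.ofReal_cpow hx.1 (a-1), Complex.ofReal_cpow h1 (b-1)]
      push_cast
      rfl
    rw [← e]
  rw [hint] at key
  have hG : Complex.Gamma (a:ℂ) = (Real.Gamma a : ℂ) := Complex.Gamma_ofReal a
  have hGb : Complex.Gamma (b:ℂ) = (Real.Gamma b : ℂ) := Complex.Gamma_ofReal b
  have hGab : Complex.Gamma ((a:ℂ) + (b:ℂ)) = (Real.Gamma (a + b) : ℂ) := by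
    rw [← Complex.ofReal_add]; exact Complex.Gamma_ofReal (a + b)
  rw [hG, hGb, hGab, ← Complex.ofReal_mul, ← Complex.ofReal_mul] at key
  have := Complex.ofReal_injective key
  rw [Beta, this]
  field_simp [(Real.Gamma_pos_of_pos (show (0:ℝ) < a + b by linarith)).ne']

lemma beta_integrable {a b : ℝ} (ha : 0 < a) (hb : 0 < b) :
    IntegrableOn (fun l : ℝ => l ^ (a - 1) * (1 - l) ^ (b - 1)) (Set.Ioo 0 1) := by
  have h := Complex.betaIntegral_convergent (u := (a:ℂ)) (v := (b:ℂ))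
    (by simpa using ha) (by simpa using hb)
  have h2 : IntervalIntegrable (fun l : ℝ => l ^ (a - 1) * (1 - l) ^ (b - 1)) volume 0 1 := by
    have : IntervalIntegrable (fun x : ℝ =>
        ((x:ℂ) ^ ((a:ℂ) - 1) * (1 - (x:ℂ)) ^ ((b:ℂ) - 1)).re) volume 0 1 := by
      rw [intervalIntegrable_iff] at h ⊢
      exact h.re
    refine this.congr_ae ?_
    rw [Set.uIoc_of_le (by norm_num : (0:ℝ) ≤ 1)]
    refine (ae_restrict_iff' measurableSet_Ioc).2 (Filter.Eventually.of_forall fun x hx => ?_)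
    have h0 : (0:ℝ) ≤ x := le_of_lt hx.1
    have h1 : (0:ℝ) ≤ 1 - x := by linarith [hx.2]
    have e : ((x ^ (a-1) * (1-x)^(b-1) : ℝ) : ℂ)
        = (x:ℂ) ^ ((a:ℂ) - 1) * (1 - (x:ℂ)) ^ ((b:ℂ) - 1) := by
      rw [Complex.ofReal_mul, Complex.ofReal_cpow h0 (a-1), Complex.ofReal_cpow h1 (b-1)]
      push_cast
      rfl
    simp only [← e, Complex.ofReal_re]
  have := h2.1
  rw [← integrableOn_Ioc_iff_integrableOn_Ioo]
  simpa using this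

lemma beta_lintegral {a b : ℝ} (ha : 0 < a) (hb : 0 < b) :
    ∫⁻ l in Set.Ioo (0:ℝ) 1, ENNReal.ofReal (l ^ (a - 1) * (1 - l) ^ (b - 1))
      = ENNReal.ofReal (Beta a b) := by
  rw [beta_eq_integral ha hb, intervalIntegral.integral_of_le (by norm_num : (0:ℝ) ≤ 1),
    integral_Ioc_eq_integral_Ioo,
    ofReal_integral_eq_lintegral_ofReal (beta_integrable ha hb)]
  refine (ae_restrict_iff' measurableSet_Ioo).2 (Filter.Eventually.of_forall fun x hx => ?_)
  exact mul_nonneg (Real.rpow_nonneg hx.1.le _) (Real.rpow_nonneg (by linarith [hx.2]) _)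

lemma beta_lintegral' {c d : ℝ} (hc : -1 < c) (hd : 0 < d) :
    ∫⁻ l in Set.Ioo (0:ℝ) 1, ENNReal.ofReal (l ^ c * (1 - l) ^ (d - 1))
      = ENNReal.ofReal (Beta (c + 1) d) := by
  have h := beta_lintegral (a := c + 1) (b := d) (by linarith) hd
  simpa using h

lemma lint_aux {K c d : ℝ} (hK : 0 ≤ K) (hc : -1 < c) (hd : 0 < d) :
    ∫⁻ l in Set.Ioo (0:ℝ) 1, ENNReal.ofReal (K * (l ^ c * (1 - l) ^ (d - 1)))
      = ENNReal.ofReal (K * Beta (c + 1) d) := by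
  simp_rw [ENNReal.ofReal_mul hK]
  have hm : Measurable fun l : ℝ => ENNReal.ofReal (l ^ c * (1 - l) ^ (d - 1)) :=
    ((measurable_id.pow measurable_const).mul
      ((measurable_const.sub measurable_id).pow measurable_const)).ennreal_ofReal
  rw [lintegral_const_mul _ hm, beta_lintegral' hc hd]

lemma ffam_measurable (N : ℕ) (α β : Fin N → ℝ) (n : ℕ) (j : ℕ → Fin N) :
    Measurable (fun q : ℝ × ℝ => ffam N α β n j q.1 q.2) := by
  induction n with
  | zero =>
      exact ENNReal.measurable_ofReal.comp
        ((measurable_fst.pow measurable_const).mul (measurable_snd.pow measurable_const))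
  | succ n ih =>
      simp only [ffam]
      refine Measurable.mul ?_ ?_
      · exact ENNReal.measurable_ofReal.comp (measurable_fst.pow measurable_const)
      · refine Measurable.lintegral_prod_right' (f := fun p : (ℝ × ℝ) × ℝ =>
          ENNReal.ofReal ((1 - p.2) ^ (α (j (n + 1)) - 1)
            * (p.2 * p.1.1 + p.1.2) ^ (-β (j (n + 1))))
            * ffam N α β n j (p.2 * p.1.1) p.1.2) ?_
        refine Measurable.mul ?_ ?_
        · refine ENNReal.measurable_ofReal.comp (Measurable.mul ?_ ?_)
          · exact (measurable_const.sub measurable_snd).pow measurable_const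
          · exact ((measurable_snd.mul (measurable_fst.comp measurable_fst)).add
              (measurable_snd.comp measurable_fst)).pow measurable_const
        · exact ih.comp ((measurable_snd.mul (measurable_fst.comp measurable_fst)).prodMk
            (measurable_snd.comp measurable_fst))

lemma sum_shift (N : ℕ) (α β : Fin N → ℝ) (j : ℕ → Fin N) (m : ℕ) :
    ∑ h ∈ Finset.range m, (α (j h) - β (j (h + 1)))
      = (∑ i ∈ Finset.range m, (α (j i) - β (j i))) + β (j 0) - β (j m) := by
  induction m with
  | zero => simp
  | succ m ih => rw [Finset.sum_range_succ, Finset.sum_range_succ, ih]; ring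

lemma cval_pos (N : ℕ) (α β : Fin N → ℝ) (hα : ∀ i, 0 < α i) (hβα : ∀ i i', β i < α i')
    (n : ℕ) (j : ℕ → Fin N) : 0 < cval N α β n j := by
  refine Finset.prod_pos fun i _ => Beta_pos ?_ (hα _)
  exact Finset.sum_pos (fun h _ => sub_pos.2 (hβα _ _))
    (Finset.nonempty_range_iff.2 (Nat.succ_ne_zero i))

/-- **Proposition 2 (i) of the paper**: each `f_{n,j}` is `(0,∞)`-valued on
`(0,∞) × (0,∞)`, decreasing in the second variable, continuous, and satisfies
`f_{n,j}(x,y) ≤ c_{n,j} x^{β_{j₁} - 1 + ∑_{i=1}^n (α_{j_i} - β_{j_i})} y^{-β_{j₁}}`,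
with equality if `β_{j₁} = ⋯ = β_{j_n} = 0` (the index is shifted by one:
`ffam N α β n j` is the paper's `f_{n+1,j}`). -/
theorem family_of_functions_estimate (N : ℕ) (hN : 0 < N) (α β : Fin N → ℝ)
    (hα : ∀ i, 0 < α i) (hβ0 : ∀ i, 0 ≤ β i) (hβα : ∀ i i', β i < α i') :
    ∀ (n : ℕ) (j : ℕ → Fin N),
      (∀ x y : ℝ, 0 < x → 0 < y → 0 < ffam N α β n j x y ∧ ffam N α β n j x y < ⊤) ∧
      (∀ x : ℝ, 0 < x → ∀ y y' : ℝ, 0 < y → y ≤ y' →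
        ffam N α β n j x y' ≤ ffam N α β n j x y) ∧
      ContinuousOn (fun q : ℝ × ℝ => ffam N α β n j q.1 q.2)
        (Set.Ioi (0 : ℝ) ×ˢ Set.Ioi (0 : ℝ)) ∧
      (∀ x y : ℝ, 0 < x → 0 < y →
        ffam N α β n j x y
          ≤ ENNReal.ofReal (cval N α β n j
              * x ^ (β (j 0) - 1 + ∑ i ∈ Finset.range (n + 1), (α (j i) - β (j i)))
              * y ^ (-β (j 0)))) ∧
      ((∀ i ≤ n, β (j i) = 0) → ∀ x y : ℝ, 0 < x → 0 < y →
        ffam N α β n j x y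
          = ENNReal.ofReal (cval N α β n j
              * x ^ (β (j 0) - 1 + ∑ i ∈ Finset.range (n + 1), (α (j i) - β (j i)))
              * y ^ (-β (j 0)))) := by
  intro n
  induction n with
  | zero =>
      intro j
      have hex : β (j 0) - 1 + ∑ i ∈ Finset.range (0 + 1), (α (j i) - β (j i))
          = α (j 0) - 1 := by
        rw [Finset.sum_range_one]; ring
      have hc : cval N α β 0 j = 1 := by simp [cval]
      refine ⟨?_, ?_, ?_, ?_, ?_⟩
      · intro x y hx hy
        simp only [ffam]
        exact ⟨ENNReal.ofReal_pos.2 (mul_pos (Real.rpow_pos_of_pos hx _)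
          (Real.rpow_pos_of_pos hy _)), ENNReal.ofReal_lt_top⟩
      · intro x hx y y' hy hyy'
        simp only [ffam]
        exact ENNReal.ofReal_le_ofReal (mul_le_mul_of_nonneg_left
          (Real.rpow_le_rpow_of_nonpos hy hyy' (neg_nonpos.2 (hβ0 _)))
          (Real.rpow_nonneg hx.le _))
      · simp only [ffam]
        refine continuousOn_of_forall_continuousAt fun p hp => ?_
        refine ENNReal.continuous_ofReal.continuousAt.comp (ContinuousAt.mul ?_ ?_)
        · exact (Real.continuousAt_rpow_const _ _ (Or.inl (ne_of_gt hp.1))).comp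
            continuousAt_fst
        · exact (Real.continuousAt_rpow_const _ _ (Or.inl (ne_of_gt hp.2))).comp
            continuousAt_snd
      · intro x y hx hy
        simp only [ffam, hex, hc, one_mul]
        exact le_refl _
      · intro hz x y hx hy
        simp only [ffam, hex, hc, one_mul]
  | succ n ih =>
      intro j
      obtain ⟨ihPos, ihMono, ihCont, ihBound, ihEq⟩ := ih j
      have ha : 0 < α (j (n + 1)) := hα _
      set E : ℝ := β (j 0) - 1 + ∑ i ∈ Finset.range (n + 1), (α (j i) - β (j i)) with hEdef
      set A : ℝ := ∑ h ∈ Finset.range (n + 1), (α (j h) - β (j (h + 1))) with hAdef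
      have hA : A = E + 1 - β (j (n + 1)) := by
        rw [hAdef, hEdef, sum_shift]; ring
      have hApos : 0 < A := by
        rw [hAdef]
        exact Finset.sum_pos (fun h _ => sub_pos.2 (hβα _ _))
          (Finset.nonempty_range_iff.2 (Nat.succ_ne_zero n))
      have hcn : 0 < cval N α β n j := cval_pos N α β hα hβα n j
      have hcs : cval N α β (n + 1) j = cval N α β n j * Beta A (α (j (n + 1))) := by
        rw [hAdef]; exact Finset.prod_range_succ _ _
      have hEb : E - β (j (n + 1)) = A - 1 := by rw [hA]; ring
      have hE1 : -1 < E := by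
        have := hβ0 (j (n + 1)); linarith
      have hsum2 : β (j 0) - 1 + ∑ i ∈ Finset.range (n + 1 + 1), (α (j i) - β (j i))
          = E + (α (j (n + 1)) - β (j (n + 1))) := by
        rw [hEdef, Finset.sum_range_succ]; ring
      have hmeas : ∀ u v : ℝ, Measurable (fun l : ℝ =>
          ENNReal.ofReal ((1 - l) ^ (α (j (n + 1)) - 1) * (l * u + v) ^ (-β (j (n + 1))))
            * ffam N α β n j (l * u) v) := by
        intro u v
        exact (ENNReal.measurable_ofReal.comp
          (((measurable_const.sub measurable_id).pow measurable_const).mul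
            (((measurable_id.mul_const u).add_const v).pow measurable_const))).mul
          ((ffam_measurable N α β n j).comp
            ((measurable_id.mul_const u).prodMk measurable_const))
      -- Part (iv): the upper bound
      have part4 : ∀ x y : ℝ, 0 < x → 0 < y →
          ffam N α β (n + 1) j x y
            ≤ ENNReal.ofReal (cval N α β (n + 1) j
                * x ^ (β (j 0) - 1 + ∑ i ∈ Finset.range (n + 1 + 1), (α (j i) - β (j i)))
                * y ^ (-β (j 0))) := by
        intro x y hx hy
        simp only [ffam]
        have hKnn : 0 ≤ cval N α β n j * x ^ (A - 1) * y ^ (-β (j 0)) :=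
          mul_nonneg (mul_nonneg hcn.le (Real.rpow_nonneg hx.le _))
            (Real.rpow_nonneg hy.le _)
        have hbound : (∫⁻ l in Set.Ioo (0:ℝ) 1,
            ENNReal.ofReal ((1 - l) ^ (α (j (n + 1)) - 1) * (l * x + y) ^ (-β (j (n + 1))))
              * ffam N α β n j (l * x) y)
            ≤ ENNReal.ofReal ((cval N α β n j * x ^ (A - 1) * y ^ (-β (j 0)))
                * Beta A (α (j (n + 1)))) := by
          calc (∫⁻ l in Set.Ioo (0:ℝ) 1,
              ENNReal.ofReal ((1 - l) ^ (α (j (n + 1)) - 1) * (l * x + y) ^ (-β (j (n + 1))))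
                * ffam N α β n j (l * x) y)
              ≤ ∫⁻ l in Set.Ioo (0:ℝ) 1,
                  ENNReal.ofReal ((cval N α β n j * x ^ (A - 1) * y ^ (-β (j 0)))
                    * (l ^ (A - 1) * (1 - l) ^ (α (j (n + 1)) - 1))) := by
                refine setLIntegral_mono (ENNReal.measurable_ofReal.comp
                  (measurable_const.mul ((measurable_id.pow measurable_const).mul
                    ((measurable_const.sub measurable_id).pow measurable_const)))) ?_
                intro l hl
                obtain ⟨hl0, hl1⟩ := hl
                have hlx : 0 < l * x := mul_pos hl0 hx
                calc ENNReal.ofReal ((1 - l) ^ (α (j (n + 1)) - 1)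
                      * (l * x + y) ^ (-β (j (n + 1)))) * ffam N α β n j (l * x) y
                    ≤ ENNReal.ofReal ((1 - l) ^ (α (j (n + 1)) - 1)
                        * (l * x) ^ (-β (j (n + 1))))
                      * ENNReal.ofReal (cval N α β n j * (l * x) ^ E * y ^ (-β (j 0))) := by
                      refine mul_le_mul' (ENNReal.ofReal_le_ofReal ?_) (ihBound _ _ hlx hy)
                      exact mul_le_mul_of_nonneg_left
                        (Real.rpow_le_rpow_of_nonpos hlx (by linarith)
                          (neg_nonpos.2 (hβ0 _)))
                        (Real.rpow_nonneg (by linarith) _)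
                  _ = ENNReal.ofReal ((cval N α β n j * x ^ (A - 1) * y ^ (-β (j 0)))
                        * (l ^ (A - 1) * (1 - l) ^ (α (j (n + 1)) - 1))) := by
                      rw [← ENNReal.ofReal_mul (mul_nonneg
                        (Real.rpow_nonneg (by linarith) _) (Real.rpow_nonneg hlx.le _))]
                      congr 1
                      have h2 : (l * x) ^ (-β (j (n + 1))) * (l * x) ^ E
                          = (l * x) ^ (A - 1) := by
                        rw [← Real.rpow_add hlx]; congr 1; rw [hA]; ring
                      calc (1 - l) ^ (α (j (n + 1)) - 1) * (l * x) ^ (-β (j (n + 1)))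
                            * (cval N α β n j * (l * x) ^ E * y ^ (-β (j 0)))
                          = ((l * x) ^ (-β (j (n + 1))) * (l * x) ^ E)
                            * (cval N α β n j * y ^ (-β (j 0))
                              * (1 - l) ^ (α (j (n + 1)) - 1)) := by ring
                        _ = (cval N α β n j * x ^ (A - 1) * y ^ (-β (j 0)))
                            * (l ^ (A - 1) * (1 - l) ^ (α (j (n + 1)) - 1)) := by
                            rw [h2, Real.mul_rpow hl0.le hx.le]; ring
            _ = ENNReal.ofReal ((cval N α β n j * x ^ (A - 1) * y ^ (-β (j 0)))
                  * Beta A (α (j (n + 1)))) := by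
                have h := lint_aux hKnn (show (-1:ℝ) < A - 1 by linarith) ha
                simpa using h
        calc ENNReal.ofReal (x ^ α (j (n + 1))) * _
            ≤ ENNReal.ofReal (x ^ α (j (n + 1)))
              * ENNReal.ofReal ((cval N α β n j * x ^ (A - 1) * y ^ (-β (j 0)))
                * Beta A (α (j (n + 1)))) := mul_le_mul_right hbound _
          _ = ENNReal.ofReal (cval N α β (n + 1) j
                * x ^ (β (j 0) - 1 + ∑ i ∈ Finset.range (n + 1 + 1), (α (j i) - β (j i)))
                * y ^ (-β (j 0))) := by
              rw [← ENNReal.ofReal_mul (Real.rpow_nonneg hx.le _)]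
              congr 1
              have hxe : x ^ (E + (α (j (n + 1)) - β (j (n + 1))))
                  = x ^ (A - 1) * x ^ (α (j (n + 1))) := by
                rw [← Real.rpow_add hx]; congr 1; rw [hA]; ring
              rw [hcs, hsum2, hxe]; ring
      -- Part (v): equality when all β vanish
      have part5 : (∀ i ≤ n + 1, β (j i) = 0) → ∀ x y : ℝ, 0 < x → 0 < y →
          ffam N α β (n + 1) j x y
            = ENNReal.ofReal (cval N α β (n + 1) j
                * x ^ (β (j 0) - 1 + ∑ i ∈ Finset.range (n + 1 + 1), (α (j i) - β (j i)))
                * y ^ (-β (j 0))) := by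
        intro hz x y hx hy
        have hb : β (j (n + 1)) = 0 := hz _ le_rfl
        have hE' : E = A - 1 := by rw [← hEb, hb, sub_zero]
        simp only [ffam]
        have hKnn : 0 ≤ cval N α β n j * x ^ (A - 1) * y ^ (-β (j 0)) :=
          mul_nonneg (mul_nonneg hcn.le (Real.rpow_nonneg hx.le _))
            (Real.rpow_nonneg hy.le _)
        have hIeq : (∫⁻ l in Set.Ioo (0:ℝ) 1,
            ENNReal.ofReal ((1 - l) ^ (α (j (n + 1)) - 1) * (l * x + y) ^ (-β (j (n + 1))))
              * ffam N α β n j (l * x) y)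
            = ENNReal.ofReal ((cval N α β n j * x ^ (A - 1) * y ^ (-β (j 0)))
                * Beta A (α (j (n + 1)))) := by
          rw [setLIntegral_congr_fun measurableSet_Ioo
            (fun l hl => ?_)]
          · have h := lint_aux hKnn (show (-1:ℝ) < A - 1 by linarith) ha
            simpa using h
          · obtain ⟨hl0, hl1⟩ := hl
            have hlx : 0 < l * x := mul_pos hl0 hx
            rw [ihEq (fun i hi => hz i (hi.trans (Nat.le_succ n))) _ _ hlx hy, hb,
              neg_zero, Real.rpow_zero, mul_one,
              ← ENNReal.ofReal_mul (Real.rpow_nonneg (by linarith) _)]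
            congr 1
            rw [hE', Real.mul_rpow hl0.le hx.le]; ring
        rw [hIeq, ← ENNReal.ofReal_mul (Real.rpow_nonneg hx.le _)]
        congr 1
        have hxe : x ^ (E + (α (j (n + 1)) - β (j (n + 1))))
            = x ^ (A - 1) * x ^ (α (j (n + 1))) := by
          rw [← Real.rpow_add hx]; congr 1; rw [hA]; ring
        rw [hcs, hsum2, hxe]; ring
      -- Part (i): positivity and finiteness
      have part1 : ∀ x y : ℝ, 0 < x → 0 < y →
          0 < ffam N α β (n + 1) j x y ∧ ffam N α β (n + 1) j x y < ⊤ := by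
        intro x y hx hy
        constructor
        · simp only [ffam]
          set g : ℝ → ℝ≥0∞ := fun l =>
            ENNReal.ofReal ((1 - l) ^ (α (j (n + 1)) - 1) * (l * x + y) ^ (-β (j (n + 1))))
              * ffam N α β n j (l * x) y with hgdef
          have hxy2 : (0:ℝ) < (1/2 : ℝ) * x := by positivity
          have hval : (0:ℝ) < (1 - (1/2:ℝ)) ^ (α (j (n + 1)) - 1)
              * ((1/2:ℝ) * x + y) ^ (-β (j (n + 1))) :=
            mul_pos (Real.rpow_pos_of_pos (by norm_num) _)
              (Real.rpow_pos_of_pos (by linarith) _)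
          have hg2 : 0 < g (1/2) :=
            ENNReal.mul_pos (ENNReal.ofReal_pos.2 hval).ne' (ihPos _ _ hxy2 hy).1.ne'
          have hgfin : g (1/2) < ⊤ :=
            mul_lt_top ENNReal.ofReal_lt_top (ihPos _ _ hxy2 hy).2
          have hgc : ContinuousAt g (1/2 : ℝ) := by
            refine ENNReal.Tendsto.mul ?_ (Or.inr (ihPos _ _ hxy2 hy).2.ne) ?_
              (Or.inr ENNReal.ofReal_ne_top)
            · refine (ENNReal.continuous_ofReal.continuousAt).comp
                (ContinuousAt.mul ?_ ?_)
              · exact (Real.continuousAt_rpow_const _ _ (Or.inl (by norm_num))).comp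
                  ((continuous_const.sub continuous_id).continuousAt)
              · exact (Real.continuousAt_rpow_const _ _ (Or.inl (by positivity))).comp
                  (((continuous_id.mul continuous_const).add continuous_const).continuousAt)
            · have hmem : ((1/2 : ℝ) * x, y) ∈ Set.Ioi (0:ℝ) ×ˢ Set.Ioi (0:ℝ) :=
                Set.mem_prod.2 ⟨hxy2, hy⟩
              have h1 : ContinuousAt (fun l : ℝ => ((l * x, y) : ℝ × ℝ)) (1/2) :=
                ((continuous_id.mul continuous_const).prodMk continuous_const).continuousAt
              exact ContinuousAt.comp (x := (1/2 : ℝ))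
                (f := fun l : ℝ => ((l * x, y) : ℝ × ℝ))
                (g := fun q : ℝ × ℝ => ffam N α β n j q.1 q.2)
                (ihCont.continuousAt ((isOpen_Ioi.prod isOpen_Ioi).mem_nhds hmem)) h1
          set c : ℝ≥0∞ := g (1/2) / 2 with hcdef
          have hc0 : c ≠ 0 := by
            simp only [hcdef]
            exact (ENNReal.div_pos hg2.ne' (by norm_num)).ne'
          have hclt : c < g (1/2) := ENNReal.half_lt_self hg2.ne' hgfin.ne
          have hev : g ⁻¹' (Set.Ioi c) ∈ nhds (1/2 : ℝ) := hgc (Ioi_mem_nhds hclt)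
          obtain ⟨ε, hε, hball⟩ := Metric.mem_nhds_iff.1 hev
          set δ : ℝ := min (ε/2) (1/4) with hδdef
          have hδ0 : 0 < δ := lt_min (half_pos hε) (by norm_num)
          have hδε : δ ≤ ε/2 := min_le_left _ _
          have hδ4 : δ ≤ 1/4 := min_le_right _ _
          have hsub : Set.Ioo (1/2 - δ) (1/2 + δ) ⊆ g ⁻¹' (Set.Ioi c) := by
            intro l hl
            refine hball ?_
            rw [Metric.mem_ball, Real.dist_eq, abs_sub_lt_iff]
            constructor <;> [linarith [hl.2]; linarith [hl.1]]
          have hsub2 : Set.Ioo (1/2 - δ) (1/2 + δ) ⊆ Set.Ioo (0:ℝ) 1 := by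
            intro l hl
            exact ⟨by linarith [hl.1], by linarith [hl.2]⟩
          have hpos : (0:ℝ≥0∞) < ∫⁻ l in Set.Ioo (0:ℝ) 1, g l := by
            calc (0:ℝ≥0∞) < c * volume (Set.Ioo (1/2 - δ) (1/2 + δ)) := by
                  refine ENNReal.mul_pos hc0 ?_
                  rw [Real.volume_Ioo]
                  exact (ENNReal.ofReal_pos.2 (by linarith)).ne'
              _ = ∫⁻ _ in Set.Ioo (1/2 - δ) (1/2 + δ), c := by
                  rw [setLIntegral_const]
              _ ≤ ∫⁻ l in Set.Ioo (1/2 - δ) (1/2 + δ), g l := by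
                  refine setLIntegral_mono (hmeas x y) fun l hl => ?_
                  exact (hsub hl).le
              _ ≤ ∫⁻ l in Set.Ioo (0:ℝ) 1, g l := lintegral_mono_set hsub2
          exact ENNReal.mul_pos (ENNReal.ofReal_pos.2 (Real.rpow_pos_of_pos hx _)).ne'
            hpos.ne'
        · exact lt_of_le_of_lt (part4 x y hx hy) ENNReal.ofReal_lt_top
      -- Part (ii): monotonicity in the second variable
      have part2 : ∀ x : ℝ, 0 < x → ∀ y y' : ℝ, 0 < y → y ≤ y' →
          ffam N α β (n + 1) j x y' ≤ ffam N α β (n + 1) j x y := by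
        intro x hx y y' hy hyy'
        simp only [ffam]
        refine mul_le_mul_right ?_ _
        refine setLIntegral_mono (hmeas x y) fun l hl => ?_
        obtain ⟨hl0, hl1⟩ := hl
        refine mul_le_mul' (ENNReal.ofReal_le_ofReal ?_)
          (ihMono _ (mul_pos hl0 hx) _ _ hy hyy')
        refine mul_le_mul_of_nonneg_left ?_ (Real.rpow_nonneg (by linarith) _)
        exact Real.rpow_le_rpow_of_nonpos (by nlinarith) (by linarith)
          (neg_nonpos.2 (hβ0 _))
      -- Part (iii): continuity
      have part3 : ContinuousOn (fun q : ℝ × ℝ => ffam N α β (n + 1) j q.1 q.2)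
          (Set.Ioi (0 : ℝ) ×ˢ Set.Ioi (0 : ℝ)) := by
        refine continuousOn_of_forall_continuousAt fun p hp => ?_
        obtain ⟨hx, hy⟩ := hp
        simp only [Set.mem_Ioi] at hx hy
        simp only [ffam]
        set M : ℝ := max ((p.1/2) ^ E) ((2*p.1) ^ E) with hMdef
        have hMnn : 0 ≤ M := (Real.rpow_nonneg (by linarith) E).trans (le_max_left _ _)
        set K : ℝ := (p.2/2) ^ (-β (j (n + 1)))
          * (cval N α β n j * M * (p.2/2) ^ (-β (j 0))) with hKdef
        have hKnn : 0 ≤ K :=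
          mul_nonneg (Real.rpow_nonneg (by linarith) _)
            (mul_nonneg (mul_nonneg hcn.le hMnn) (Real.rpow_nonneg (by linarith) _))
        refine ENNReal.Tendsto.mul ?_
          (Or.inl (ENNReal.ofReal_pos.2 (Real.rpow_pos_of_pos hx _)).ne') ?_
          (Or.inr ENNReal.ofReal_ne_top)
        · exact (ENNReal.continuous_ofReal.continuousAt).comp
            ((Real.continuousAt_rpow_const _ _ (Or.inl hx.ne')).comp continuousAt_fst)
        · refine tendsto_lintegral_filter_of_dominated_convergence
            (fun l => ENNReal.ofReal (K * (l ^ E * (1 - l) ^ (α (j (n + 1)) - 1))))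
            (Filter.Eventually.of_forall fun q => hmeas q.1 q.2) ?_ ?_ ?_
          · have hU : Set.Ioo (p.1/2) (2*p.1) ×ˢ Set.Ioo (p.2/2) (2*p.2) ∈ nhds p :=
              (isOpen_Ioo.prod isOpen_Ioo).mem_nhds
                ⟨⟨by linarith, by linarith⟩, ⟨by linarith, by linarith⟩⟩
            filter_upwards [hU] with q hq
            obtain ⟨⟨hq1l, hq1u⟩, hq2l, hq2u⟩ := hq
            have hq1 : 0 < q.1 := by linarith
            have hq2 : 0 < q.2 := by linarith
            refine (ae_restrict_iff' measurableSet_Ioo).2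
              (Filter.Eventually.of_forall fun l hl => ?_)
            obtain ⟨hl0, hl1⟩ := hl
            have hlq : 0 < l * q.1 := mul_pos hl0 hq1
            calc ENNReal.ofReal ((1 - l) ^ (α (j (n + 1)) - 1)
                  * (l * q.1 + q.2) ^ (-β (j (n + 1)))) * ffam N α β n j (l * q.1) q.2
                ≤ ENNReal.ofReal ((1 - l) ^ (α (j (n + 1)) - 1)
                    * (p.2/2) ^ (-β (j (n + 1))))
                  * ENNReal.ofReal (cval N α β n j * (l * q.1) ^ E * q.2 ^ (-β (j 0))) := by
                  refine mul_le_mul' (ENNReal.ofReal_le_ofReal ?_) (ihBound _ _ hlq hq2)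
                  refine mul_le_mul_of_nonneg_left ?_ (Real.rpow_nonneg (by linarith) _)
                  exact Real.rpow_le_rpow_of_nonpos (by linarith) (by nlinarith)
                    (neg_nonpos.2 (hβ0 _))
              _ ≤ ENNReal.ofReal (K * (l ^ E * (1 - l) ^ (α (j (n + 1)) - 1))) := by
                  rw [← ENNReal.ofReal_mul (mul_nonneg (Real.rpow_nonneg (by linarith) _)
                    (Real.rpow_nonneg (by linarith) _))]
                  refine ENNReal.ofReal_le_ofReal ?_
                  have hxE : q.1 ^ E ≤ M := by
                    rcases le_or_gt 0 E with hE0 | hE0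
                    · exact (Real.rpow_le_rpow hq1.le (by linarith) hE0).trans
                        (le_max_right _ _)
                    · exact (Real.rpow_le_rpow_of_nonpos (by linarith) (by linarith)
                        hE0.le).trans (le_max_left _ _)
                  have hyB : q.2 ^ (-β (j 0)) ≤ (p.2/2) ^ (-β (j 0)) :=
                    Real.rpow_le_rpow_of_nonpos (by linarith) (by linarith)
                      (neg_nonpos.2 (hβ0 _))
                  have hnn : 0 ≤ (p.2/2) ^ (-β (j (n + 1))) * cval N α β n j * l ^ E
                      * (1 - l) ^ (α (j (n + 1)) - 1) :=
                    mul_nonneg (mul_nonneg (mul_nonneg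
                      (Real.rpow_nonneg (by linarith) _) hcn.le)
                      (Real.rpow_nonneg hl0.le _)) (Real.rpow_nonneg (by linarith) _)
                  calc (1 - l) ^ (α (j (n + 1)) - 1) * (p.2/2) ^ (-β (j (n + 1)))
                        * (cval N α β n j * (l * q.1) ^ E * q.2 ^ (-β (j 0)))
                      = ((p.2/2) ^ (-β (j (n + 1))) * cval N α β n j * l ^ E
                          * (1 - l) ^ (α (j (n + 1)) - 1)) * (q.1 ^ E * q.2 ^ (-β (j 0))) := by
                        rw [Real.mul_rpow hl0.le hq1.le]; ring
                    _ ≤ ((p.2/2) ^ (-β (j (n + 1))) * cval N α β n j * l ^ E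
                          * (1 - l) ^ (α (j (n + 1)) - 1)) * (M * (p.2/2) ^ (-β (j 0))) := by
                        exact mul_le_mul_of_nonneg_left
                          (mul_le_mul hxE hyB (Real.rpow_nonneg hq2.le _) hMnn) hnn
                    _ = K * (l ^ E * (1 - l) ^ (α (j (n + 1)) - 1)) := by
                        rw [hKdef]; ring
          · rw [lint_aux hKnn hE1 ha]
            exact ENNReal.ofReal_ne_top
          · refine (ae_restrict_iff' measurableSet_Ioo).2
              (Filter.Eventually.of_forall fun l hl => ?_)
            obtain ⟨hl0, hl1⟩ := hl
            have hlp : 0 < l * p.1 := mul_pos hl0 hx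
            refine ENNReal.Tendsto.mul ?_ (Or.inr (ihPos _ _ hlp hy).2.ne) ?_
              (Or.inr ENNReal.ofReal_ne_top)
            · refine (ENNReal.continuous_ofReal.continuousAt).comp
                (ContinuousAt.mul continuousAt_const ?_)
              exact (Real.continuousAt_rpow_const _ _
                (Or.inl (by positivity))).comp
                (((continuous_const.mul continuous_fst).add continuous_snd).continuousAt)
            · have hmem : (l * p.1, p.2) ∈ Set.Ioi (0:ℝ) ×ˢ Set.Ioi (0:ℝ) :=
                Set.mem_prod.2 ⟨hlp, hy⟩
              have h1 : ContinuousAt (fun q : ℝ × ℝ => ((l * q.1, q.2) : ℝ × ℝ)) p :=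
                ((continuous_const.mul continuous_fst).prodMk continuous_snd).continuousAt
              exact ContinuousAt.comp (x := p)
                (f := fun q : ℝ × ℝ => ((l * q.1, q.2) : ℝ × ℝ))
                (g := fun q : ℝ × ℝ => ffam N α β n j q.1 q.2)
                (ihCont.continuousAt ((isOpen_Ioi.prod isOpen_Ioi).mem_nhds hmem)) h1
      exact ⟨part1, part2, part3, part4, part5⟩
end
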